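/- arXiv:1908.02032 — 5 statements merged into one kernel-verified Lean document; each statement's English description precedes it below -/
import Mathlib

section
/- Let A be an n×n complex matrix, v ∈ ℂ^{n×s} a block vector, and Ψ = (ψ₁,…,ψ_ℓ) poles with ψⱼ ∈ ℂ ∪ {∞}, none of which is an eigenvalue of A; set q(z) := ∏_{j: ψⱼ≠∞}(z − ψⱼ). Let U be an orthonormal basis of RK_ℓ(A,v,Ψ) and A_ℓ := UᴴAU. Then for every polynomial p of degree at most ℓ such that q(A_ℓ) is invertible, one has q(A)⁻¹ p(A) v = U · q(A_ℓ)⁻¹ p(A_ℓ) · (Uᴴ v); in particular the columns of q(A)⁻¹ p(A) v lie in RK_ℓ(A,v,Ψ). -/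
open Matrix Polynomial Set MeasureTheory Filter Topology
open scoped ComplexOrder ENNReal NNReal

noncomputable section

/-- The denominator polynomial `q(z) = ∏_{ψⱼ ≠ ∞} (z - ψⱼ)` associated to a tuple of
poles `Ψ`, where `none` encodes the pole at infinity. -/
def qpoly {ℓ : ℕ} (Ψ : Fin ℓ → Option ℂ) : Polynomial ℂ :=
  ∏ j : Fin ℓ, (Ψ j).elim 1 fun ψ => X - C ψ

/-- The rational Krylov subspace `RK_ℓ(A, v, Ψ)`: the span of the columns of
`q(A)⁻¹ Aⁱ v` for `0 ≤ i ≤ ℓ`. -/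
def RK {n s : ℕ} (ℓ : ℕ) (A : Matrix (Fin n) (Fin n) ℂ)
    (v : Matrix (Fin n) (Fin s) ℂ) (Ψ : Fin ℓ → Option ℂ) : Submodule ℂ (Fin n → ℂ) :=
  Submodule.span ℂ
    { x | ∃ i ≤ ℓ, ∃ j, x = ((Polynomial.aeval A (qpoly Ψ))⁻¹ * A ^ i * v)ᵀ j }

/-- The span of the columns of a matrix. -/
def colSpan {n m : ℕ} (U : Matrix (Fin n) (Fin m) ℂ) : Submodule ℂ (Fin n → ℂ) :=
  Submodule.span ℂ (Set.range fun j => Uᵀ j)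

/-- `U` is a matrix with orthonormal columns whose column span is the subspace `W`. -/
def IsONBasisOf {n m : ℕ} (U : Matrix (Fin n) (Fin m) ℂ)
    (W : Submodule ℂ (Fin n → ℂ)) : Prop :=
  Uᴴ * U = 1 ∧ colSpan U = W

/-- The spectral norm (ℓ² operator norm) of a rectangular complex matrix; it is also the
Euclidean norm when the matrix is a single column vector. -/
def norm2 {m n : ℕ} (A : Matrix (Fin m) (Fin n) ℂ) : ℝ :=
  ‖LinearMap.toContinuousLinearMap (Matrix.toEuclideanLin A)‖

/-- The convergence rate `ρ_{[α,β]} = exp(-π² / log(4β/α))`. -/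
def rho (α β : ℝ) : ℝ := Real.exp (-(Real.pi ^ 2) / Real.log (4 * β / α))

/-- The constant `γ_{ℓ,κ} = 2.23 + (2/π)·log(4ℓ·√(κ/π))`. -/
def gammaLK (ℓ : ℕ) (κ : ℝ) : ℝ :=
  2.23 + (2 / Real.pi) * Real.log (4 * ℓ * Real.sqrt (κ / Real.pi))

section Aux

open Matrix Polynomial

lemma exists_factor_of_cols {n m s : ℕ} (U : Matrix (Fin n) (Fin m) ℂ)
    (X : Matrix (Fin n) (Fin s) ℂ) (h : ∀ j, Xᵀ j ∈ colSpan U) :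
    ∃ C : Matrix (Fin m) (Fin s) ℂ, X = U * C := by
  have h' : ∀ j, ∃ c : Fin m → ℂ, ∑ i, c i • Uᵀ i = Xᵀ j := fun j =>
    (Submodule.mem_span_range_iff_exists_fun ℂ).1 (h j)
  choose c hc using h'
  refine ⟨fun i j => c j i, ?_⟩
  ext r j
  have := congrFun (hc j) r
  simp only [Finset.sum_apply, Pi.smul_apply, Matrix.transpose_apply, smul_eq_mul] at this
  rw [← this]
  exact (Finset.sum_congr rfl fun i _ => (mul_comm _ _)).trans
    (Matrix.mul_apply (M := U) (N := (fun i j => c j i : Matrix (Fin m) (Fin s) ℂ))).symm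

lemma proj_of_cols {n m s : ℕ} {U : Matrix (Fin n) (Fin m) ℂ} (hU : Uᴴ * U = 1)
    {X : Matrix (Fin n) (Fin s) ℂ} (h : ∀ j, Xᵀ j ∈ colSpan U) :
    U * (Uᴴ * X) = X := by
  obtain ⟨C, rfl⟩ := exists_factor_of_cols U X h
  rw [← Matrix.mul_assoc Uᴴ U C, hU, Matrix.one_mul]

lemma commute_aeval_aeval {k : ℕ} (B : Matrix (Fin k) (Fin k) ℂ) (f g : Polynomial ℂ) :
    Commute (aeval B f) (aeval B g) := by
  show _ = _
  rw [← _root_.map_mul, ← _root_.map_mul, mul_comm]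

lemma commute_inv_of_commute {k : ℕ} {B Q : Matrix (Fin k) (Fin k) ℂ}
    (hQ : IsUnit Q) (h : Commute B Q) : Commute B Q⁻¹ := by
  have hd := (Matrix.isUnit_iff_isUnit_det Q).1 hQ
  have h' : Commute B ↑hQ.unit := by rwa [hQ.unit_spec]
  have h2 := h'.units_inv_right
  rwa [Matrix.coe_units_inv, hQ.unit_spec] at h2

lemma step_poly {n m s ℓ : ℕ} {A : Matrix (Fin n) (Fin n) ℂ}
    {Aℓ : Matrix (Fin m) (Fin m) ℂ} (V : Matrix (Fin m) (Fin n) ℂ)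
    {y : Matrix (Fin n) (Fin s) ℂ} {w : Matrix (Fin m) (Fin s) ℂ}
    (h : ∀ i ≤ ℓ, V * (A ^ i * y) = Aℓ ^ i * w) (r : Polynomial ℂ)
    (hr : r.natDegree ≤ ℓ) : V * (aeval A r * y) = aeval Aℓ r * w := by
  rw [Polynomial.aeval_eq_sum_range (x := A), Polynomial.aeval_eq_sum_range (x := Aℓ),
    Matrix.sum_mul, Matrix.mul_sum, Matrix.sum_mul]
  refine Finset.sum_congr rfl fun i hi => ?_
  have hi' : i ≤ ℓ := le_trans (Nat.lt_succ_iff.mp (Finset.mem_range.mp hi)) hr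
  rw [Matrix.smul_mul, Matrix.mul_smul, h i hi', Matrix.smul_mul]

end Aux

/-- Exactness property of rational Krylov subspaces. -/
theorem rational_krylov_exactness
    {n s m ℓ : ℕ}
    (A : Matrix (Fin n) (Fin n) ℂ) (v : Matrix (Fin n) (Fin s) ℂ)
    (Ψ : Fin ℓ → Option ℂ)
    (hΨ : ∀ j ψ, Ψ j = some ψ → ψ ∉ spectrum ℂ A)
    (U : Matrix (Fin n) (Fin m) ℂ) (hU : IsONBasisOf U (RK ℓ A v Ψ))
    (Aℓ : Matrix (Fin m) (Fin m) ℂ) (hAℓ : Aℓ = Uᴴ * A * U)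
    (p : Polynomial ℂ) (hp : p.natDegree ≤ ℓ)
    (hqinv : IsUnit (Polynomial.aeval Aℓ (qpoly Ψ))) :
    (Polynomial.aeval A (qpoly Ψ))⁻¹ * Polynomial.aeval A p * v =
      U * ((Polynomial.aeval Aℓ (qpoly Ψ))⁻¹ * Polynomial.aeval Aℓ p * (Uᴴ * v)) ∧
    ∀ j, ((Polynomial.aeval A (qpoly Ψ))⁻¹ * Polynomial.aeval A p * v)ᵀ j ∈ RK ℓ A v Ψ := by

  obtain ⟨hUorth, hUspan⟩ := hU
  set Q := Polynomial.aeval A (qpoly Ψ) with hQdef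
  set Qℓ := Polynomial.aeval Aℓ (qpoly Ψ) with hQℓdef
  -- Q is invertible
  have hfac : ∀ j : Fin ℓ, IsUnit (Polynomial.aeval A ((Ψ j).elim 1 fun ψ => X - C ψ)) := by
    intro j
    cases hj : Ψ j with
    | none => simp
    | some ψ =>
      have h1 := (spectrum.notMem_iff).mp (hΨ j ψ hj)
      have h2 := h1.neg
      rw [neg_sub] at h2
      simpa using h2
  have hQ : IsUnit Q := by
    have key : ∀ t : Finset (Fin ℓ),
        IsUnit (Polynomial.aeval A (∏ j ∈ t, (Ψ j).elim 1 fun ψ => X - C ψ)) := by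
      intro t
      induction t using Finset.induction with
      | empty => simp
      | insert _ _ hx ih =>
        rw [Finset.prod_insert hx, _root_.map_mul]
        exact (hfac _).mul ih
    exact key Finset.univ
  have hQdet : IsUnit Q.det := (Matrix.isUnit_iff_isUnit_det Q).1 hQ
  have hQℓdet : IsUnit Qℓ.det := (Matrix.isUnit_iff_isUnit_det Qℓ).1 hqinv
  -- degree bound for qpoly
  have hqdeg : (qpoly Ψ).natDegree ≤ ℓ := by
    refine le_trans (Polynomial.natDegree_prod_le _ _) ?_
    have h1 : ∀ j : Fin ℓ, ((Ψ j).elim 1 fun ψ => X - C ψ : Polynomial ℂ).natDegree ≤ 1 := by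
      intro j
      cases Ψ j with
      | none => simp
      | some ψ => simp [Polynomial.natDegree_X_sub_C]
    calc ∑ j : Fin ℓ, ((Ψ j).elim 1 fun ψ => X - C ψ : Polynomial ℂ).natDegree
        ≤ ∑ _j : Fin ℓ, 1 := Finset.sum_le_sum fun j _ => h1 j
      _ = ℓ := by simp
  -- membership of generators
  have memRK : ∀ i ≤ ℓ, ∀ j, (Q⁻¹ * A ^ i * v)ᵀ j ∈ RK ℓ A v Ψ := fun i hi j =>
    Submodule.subset_span ⟨i, hi, j, rfl⟩
  have projgen : ∀ i ≤ ℓ, U * (Uᴴ * (Q⁻¹ * A ^ i * v)) = Q⁻¹ * A ^ i * v := by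
    intro i hi
    exact proj_of_cols hUorth fun j => by rw [hUspan]; exact memRK i hi j
  -- commuting facts
  have hcAQ : Commute A Q := by
    have := commute_aeval_aeval A X (qpoly Ψ)
    simpa using this
  have hcAQi : Commute A Q⁻¹ := commute_inv_of_commute hQ hcAQ
  set y0 : Matrix (Fin n) (Fin s) ℂ := Q⁻¹ * v with hy0def
  have key0 : ∀ i : ℕ, A ^ i * y0 = Q⁻¹ * A ^ i * v := by
    intro i
    rw [hy0def, ← Matrix.mul_assoc, (hcAQi.pow_left i).eq]
  -- Step C
  have stepC : ∀ i ≤ ℓ, Uᴴ * (A ^ i * y0) = Aℓ ^ i * (Uᴴ * y0) := by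
    intro i
    induction i with
    | zero => intro _; simp
    | succ k ih =>
      intro hk
      have hk' : k ≤ ℓ := by omega
      have hproj : U * (Uᴴ * (A ^ k * y0)) = A ^ k * y0 := by
        rw [key0 k]; exact projgen k hk'
      calc Uᴴ * (A ^ (k + 1) * y0) = Uᴴ * (A * (A ^ k * y0)) := by
            rw [pow_succ', Matrix.mul_assoc]
        _ = Uᴴ * (A * (U * (Uᴴ * (A ^ k * y0)))) := by rw [hproj]
        _ = Uᴴ * A * U * (Uᴴ * (A ^ k * y0)) := by
            simp only [Matrix.mul_assoc]
        _ = Aℓ * (Aℓ ^ k * (Uᴴ * y0)) := by rw [← hAℓ, ih hk']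
        _ = Aℓ ^ (k + 1) * (Uᴴ * y0) := by rw [pow_succ', Matrix.mul_assoc]
  -- Step E : Uᴴ y0 = Qℓ⁻¹ (Uᴴ v)
  have hQy0 : Q * y0 = v := Matrix.mul_nonsing_inv_cancel_left Q v hQdet
  have hUv : Uᴴ * v = Qℓ * (Uᴴ * y0) := by
    rw [← hQy0]
    exact step_poly Uᴴ stepC (qpoly Ψ) hqdeg
  have hy0 : Uᴴ * y0 = Qℓ⁻¹ * (Uᴴ * v) := by
    rw [hUv, Matrix.nonsing_inv_mul_cancel_left Qℓ _ hQℓdet]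
  -- LHS rewriting
  have hcPQ : Commute (Polynomial.aeval A p) Q := commute_aeval_aeval A p (qpoly Ψ)
  have hcPQi : Commute (Polynomial.aeval A p) Q⁻¹ := commute_inv_of_commute hQ hcPQ
  have hLHS : Q⁻¹ * Polynomial.aeval A p * v = Polynomial.aeval A p * y0 := by
    rw [hy0def, ← hcPQi.eq, Matrix.mul_assoc]
  have hcPQℓ : Commute (Polynomial.aeval Aℓ p) Qℓ := commute_aeval_aeval Aℓ p (qpoly Ψ)
  have hcPQℓi : Commute (Polynomial.aeval Aℓ p) Qℓ⁻¹ := commute_inv_of_commute hqinv hcPQℓ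
  have hmain : Uᴴ * (Q⁻¹ * Polynomial.aeval A p * v) =
      Qℓ⁻¹ * Polynomial.aeval Aℓ p * (Uᴴ * v) := by
    rw [hLHS, step_poly Uᴴ stepC p hp, hy0, ← Matrix.mul_assoc, hcPQℓi.eq]
  -- membership of LHS columns
  have hexp : Q⁻¹ * Polynomial.aeval A p * v =
      ∑ i ∈ Finset.range (p.natDegree + 1), p.coeff i • (Q⁻¹ * A ^ i * v) := by
    rw [Polynomial.aeval_eq_sum_range (x := A), Matrix.mul_sum, Matrix.sum_mul]
    exact Finset.sum_congr rfl fun i _ => by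
      rw [Matrix.mul_smul, Matrix.smul_mul]
  have hmem : ∀ j, (Q⁻¹ * Polynomial.aeval A p * v)ᵀ j ∈ RK ℓ A v Ψ := by
    intro j
    rw [hexp]
    have hT : (∑ i ∈ Finset.range (p.natDegree + 1), p.coeff i • (Q⁻¹ * A ^ i * v))ᵀ j =
        ∑ i ∈ Finset.range (p.natDegree + 1), p.coeff i • (Q⁻¹ * A ^ i * v)ᵀ j := by
      funext r
      simp only [Matrix.transpose_apply, Matrix.sum_apply, Finset.sum_apply,
        Pi.smul_apply, Matrix.smul_apply, smul_eq_mul]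
    rw [hT]
    exact Submodule.sum_mem _ fun i hi => Submodule.smul_mem _ _
      (memRK i (le_trans (Nat.lt_succ_iff.mp (Finset.mem_range.mp hi)) hp) j)
  have hproj2 : U * (Uᴴ * (Q⁻¹ * Polynomial.aeval A p * v)) =
      Q⁻¹ * Polynomial.aeval A p * v :=
    proj_of_cols hUorth fun j => by rw [hUspan]; exact hmem j
  refine ⟨?_, hmem⟩
  rw [← hproj2, hmain]
end
end

section
/- Let A be an n×n Hermitian positive definite complex matrix with spectrum in [a,b] (0 < a ≤ b), v ∈ ℂ^{n×s}, Ψ = (ψ₁,…,ψ_ℓ) poles with no ψⱼ an eigenvalue of A, U an orthonormal basis of RK_ℓ(A,v,Ψ), A_ℓ := UᴴAU, v_ℓ := Uᴴv. Fix t ≥ 0 and a polynomial p of degree at most ℓ, and set r(z) := p(z)/q(z) with q(z) := ∏_{j: ψⱼ≠∞}(z − ψⱼ). If M, m are reals with m > 0, |r(z)| ≤ M for all z ∈ [a,b], and |r(z)| ≥ m for all z ∈ (−∞,0] that are not poles of r, then ‖(tI+A)⁻¹v − U(tI+A_ℓ)⁻¹v_ℓ‖₂ ≤ (2/(t+a))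 · (M/m) · ‖v‖₂. -/
open Matrix Polynomial Set MeasureTheory Filter Topology
open scoped ComplexOrder ENNReal NNReal

noncomputable section

namespace RKaux
variable {k l m n s ℓ : ℕ}


lemma norm2_nonneg (A : Matrix (Fin m) (Fin n) ℂ) : 0 ≤ norm2 A := norm_nonneg _

lemma norm2_apply_le (A : Matrix (Fin m) (Fin n) ℂ) (y : EuclideanSpace ℂ (Fin n)) :
    ‖Matrix.toEuclideanLin A y‖ ≤ norm2 A * ‖y‖ := by
  simpa [norm2] using (LinearMap.toContinuousLinearMap (Matrix.toEuclideanLin A)).le_opNorm y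

lemma norm2_le_bound {A : Matrix (Fin m) (Fin n) ℂ} {K : ℝ} (hK : 0 ≤ K)
    (h : ∀ y : EuclideanSpace ℂ (Fin n), ‖Matrix.toEuclideanLin A y‖ ≤ K * ‖y‖) :
    norm2 A ≤ K := by
  apply ContinuousLinearMap.opNorm_le_bound _ hK
  intro y; simpa using h y

lemma norm2_mul_le (A : Matrix (Fin m) (Fin n) ℂ) (B : Matrix (Fin n) (Fin k) ℂ) :
    norm2 (A * B) ≤ norm2 A * norm2 B := by
  apply norm2_le_bound (mul_nonneg (norm2_nonneg A) (norm2_nonneg B))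
  intro y
  have h : Matrix.toEuclideanLin (A * B) y = Matrix.toEuclideanLin A (Matrix.toEuclideanLin B y) := by
    simp [Matrix.toEuclideanLin_apply, Matrix.mulVec_mulVec]
  rw [h, mul_assoc]
  exact le_trans (norm2_apply_le A _) (by
    have := norm2_apply_le B y
    exact mul_le_mul_of_nonneg_left this (norm2_nonneg A))

lemma norm2_smul (c : ℂ) (A : Matrix (Fin m) (Fin n) ℂ) : norm2 (c • A) = ‖c‖ * norm2 A := by
  unfold norm2
  rw [_root_.map_smul, _root_.map_smul]; exact norm_smul c (LinearMap.toContinuousLinearMap (toEuclideanLin A))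

lemma norm2_sub_le (A B : Matrix (Fin m) (Fin n) ℂ) : norm2 (A - B) ≤ norm2 A + norm2 B := by
  unfold norm2
  rw [map_sub, map_sub]
  exact norm_sub_le _ _

lemma norm2_conjTranspose (A : Matrix (Fin m) (Fin n) ℂ) : norm2 Aᴴ = norm2 A := by
  unfold norm2
  rw [Matrix.toEuclideanLin_conjTranspose_eq_adjoint, LinearMap.adjoint_toContinuousLinearMap]
  exact LinearIsometryEquiv.norm_map ContinuousLinearMap.adjoint _




def enorm {k : ℕ} (x : Fin k → ℂ) : ℝ := ‖(WithLp.equiv 2 (Fin k → ℂ)).symm x‖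

lemma enorm_eq (x : Fin k → ℂ) : enorm x = Real.sqrt (∑ i, ‖x i‖ ^ 2) := by
  rw [enorm, EuclideanSpace.norm_eq]
  rfl

lemma dot_self_re (x : Fin k → ℂ) : (star x ⬝ᵥ x).re = ∑ i, ‖x i‖ ^ 2 := by
  rw [dotProduct]
  rw [Complex.re_sum]
  congr 1; funext i
  simp [Complex.normSq_eq_norm_sq, ← Complex.normSq_eq_norm_sq, Complex.normSq_apply, Complex.mul_re,
    Pi.star_apply, Complex.sq_norm]


lemma iso_dot {U : Matrix (Fin n) (Fin m) ℂ} (hUU : Uᴴ * U = 1) (z : Fin m → ℂ) :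
    star (U *ᵥ z) ⬝ᵥ (U *ᵥ z) = star z ⬝ᵥ z := by
  rw [star_mulVec, dotProduct_mulVec, vecMul_vecMul, hUU, vecMul_one]

lemma enorm_mulVec_iso {U : Matrix (Fin n) (Fin m) ℂ} (hUU : Uᴴ * U = 1) (z : Fin m → ℂ) :
    enorm (U *ᵥ z) = enorm z := by
  rw [enorm_eq, enorm_eq, ← dot_self_re, ← dot_self_re, iso_dot hUU]



lemma norm2_le_bound' {A : Matrix (Fin m) (Fin n) ℂ} {K : ℝ} (hK : 0 ≤ K)
    (h : ∀ y : Fin n → ℂ, enorm (A *ᵥ y) ≤ K * enorm y) : norm2 A ≤ K := by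
  apply norm2_le_bound hK
  intro y
  have := h ((WithLp.equiv 2 (Fin n → ℂ)) y)
  simpa [enorm, Matrix.toEuclideanLin_apply] using this

lemma norm2_apply_le' (A : Matrix (Fin m) (Fin n) ℂ) (y : Fin n → ℂ) :
    enorm (A *ᵥ y) ≤ norm2 A * enorm y := by
  have := norm2_apply_le A ((WithLp.equiv 2 (Fin n → ℂ)).symm y)
  simpa [enorm, Matrix.toEuclideanLin_apply] using this


lemma enorm_nonneg (x : Fin k → ℂ) : 0 ≤ enorm x := norm_nonneg _

lemma norm2_diag_le {d : Fin k → ℂ} {K : ℝ} (hK : 0 ≤ K) (h : ∀ i, ‖d i‖ ≤ K) :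
    norm2 (diagonal d) ≤ K := by
  apply norm2_le_bound' hK
  intro y
  rw [enorm_eq, enorm_eq]
  rw [← Real.sqrt_sq hK, ← Real.sqrt_mul (by positivity)]
  apply Real.sqrt_le_sqrt
  rw [Finset.mul_sum]
  apply Finset.sum_le_sum
  intro i _
  rw [Matrix.mulVec_diagonal, norm_mul, mul_pow]
  apply mul_le_mul_of_nonneg_right _ (by positivity)
  exact pow_le_pow_left₀ (norm_nonneg _) (h i) 2

lemma norm2_isoL_le {U : Matrix (Fin n) (Fin m) ℂ} (hUU : Uᴴ * U = 1)
    (X : Matrix (Fin m) (Fin k) ℂ) : norm2 (U * X) ≤ norm2 X := by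
  apply norm2_le_bound' (norm2_nonneg X)
  intro y
  rw [← Matrix.mulVec_mulVec, enorm_mulVec_iso hUU]
  exact norm2_apply_le' X y

lemma norm2_iso_le_one {U : Matrix (Fin n) (Fin m) ℂ} (hUU : Uᴴ * U = 1) : norm2 U ≤ 1 := by
  apply norm2_le_bound' zero_le_one
  intro y
  rw [enorm_mulVec_iso hUU, one_mul]

lemma norm2_conj_diag_le {V : Matrix (Fin k) (Fin k) ℂ} (hV : Vᴴ * V = 1)
    {d : Fin k → ℂ} {K : ℝ} (hK : 0 ≤ K) (h : ∀ i, ‖d i‖ ≤ K) :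
    norm2 (V * diagonal d * Vᴴ) ≤ K := by
  rw [mul_assoc]
  refine le_trans (norm2_isoL_le hV _) ?_
  refine le_trans (norm2_mul_le _ _) ?_
  have h1 : norm2 Vᴴ ≤ 1 := by
    rw [norm2_conjTranspose]
    exact norm2_iso_le_one hV
  calc norm2 (diagonal d) * norm2 Vᴴ ≤ K * 1 :=
        mul_le_mul (norm2_diag_le hK h) h1 (norm2_nonneg _) hK
    _ = K := mul_one K



lemma aeval_diagonal (d : Fin k → ℂ) (g : Polynomial ℂ) :
    aeval (Matrix.diagonal d) g = Matrix.diagonal (fun i => g.eval (d i)) := by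
  induction g using Polynomial.induction_on' with
  | add p q hp hq =>
    rw [map_add, hp, hq, Matrix.diagonal_add]
    congr 1; funext i; simp [eval_add]
  | monomial n a =>
    rw [aeval_monomial, Algebra.algebraMap_eq_smul_one, Matrix.diagonal_pow, smul_mul_assoc,
      one_mul]
    ext i j
    by_cases h : i = j <;>
      simp [Matrix.diagonal_apply, h, eval_monomial, Pi.pow_apply]

lemma conj_pow {V B : Matrix (Fin k) (Fin k) ℂ} (hV2 : Vᴴ * V = 1) (n : ℕ) :
    (V * B * Vᴴ) ^ n = V * B ^ n * Vᴴ := by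
  induction n with
  | zero =>
    have hV1 := mul_eq_one_comm.mp hV2
    simp [pow_zero, Matrix.mul_one, hV1]
  | succ n ih =>
    rw [pow_succ, pow_succ, ih]
    calc V * B ^ n * Vᴴ * (V * B * Vᴴ) = V * B ^ n * (Vᴴ * V) * B * Vᴴ := by
          simp only [Matrix.mul_assoc]
      _ = V * (B ^ n * B) * Vᴴ := by rw [hV2]; simp only [Matrix.mul_assoc, Matrix.mul_one]
      _ = _ := by rw [Matrix.mul_assoc]

lemma conj_aeval {V B : Matrix (Fin k) (Fin k) ℂ} (hV1 : V * Vᴴ = 1) (hV2 : Vᴴ * V = 1)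
    (g : Polynomial ℂ) : aeval (V * B * Vᴴ) g = V * (aeval B g) * Vᴴ := by
  induction g using Polynomial.induction_on' with
  | add p q hp hq => rw [map_add, hp, hq, map_add, Matrix.mul_add, Matrix.add_mul]
  | monomial n a =>
    rw [aeval_monomial, aeval_monomial, conj_pow hV2]
    simp only [Algebra.algebraMap_eq_smul_one, smul_mul_assoc, one_mul, Matrix.mul_smul,
      Matrix.smul_mul]



lemma conj_mul {V X Y : Matrix (Fin k) (Fin k) ℂ} (hV2 : Vᴴ * V = 1) :
    (V * X * Vᴴ) * (V * Y * Vᴴ) = V * (X * Y) * Vᴴ := by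
  calc (V * X * Vᴴ) * (V * Y * Vᴴ) = V * X * (Vᴴ * V) * Y * Vᴴ := by
        simp only [Matrix.mul_assoc]
    _ = V * (X * Y) * Vᴴ := by rw [hV2]; simp only [Matrix.mul_assoc, Matrix.mul_one]

lemma conj_inv {V : Matrix (Fin k) (Fin k) ℂ} (hV1 : V * Vᴴ = 1) (hV2 : Vᴴ * V = 1)
    {e : Fin k → ℂ} (he : ∀ i, e i ≠ 0) :
    (V * Matrix.diagonal e * Vᴴ)⁻¹ = V * Matrix.diagonal (fun i => (e i)⁻¹) * Vᴴ := by
  apply Matrix.inv_eq_right_inv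
  rw [conj_mul hV2, Matrix.diagonal_mul_diagonal]
  have : (fun i => e i * (e i)⁻¹) = fun _ => (1:ℂ) := by
    funext i; exact mul_inv_cancel₀ (he i)
  rw [this, Matrix.diagonal_one, Matrix.mul_one, hV1]

lemma conj_mul_right_inv {V : Matrix (Fin k) (Fin k) ℂ} (hV1 : V * Vᴴ = 1) (hV2 : Vᴴ * V = 1)
    {e : Fin k → ℂ} (he : ∀ i, e i ≠ 0) :
    (V * Matrix.diagonal e * Vᴴ) * (V * Matrix.diagonal e * Vᴴ)⁻¹ = 1 := by
  rw [conj_inv hV1 hV2 he, conj_mul hV2, Matrix.diagonal_mul_diagonal]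
  have : (fun i => e i * (e i)⁻¹) = fun _ => (1:ℂ) := by
    funext i; exact mul_inv_cancel₀ (he i)
  rw [this, Matrix.diagonal_one, Matrix.mul_one, hV1]

/-- spectral decomposition with complex diagonal entries -/
lemma herm_spectral {H : Matrix (Fin k) (Fin k) ℂ} (hH : H.IsHermitian) :
    H = (hH.eigenvectorUnitary : Matrix (Fin k) (Fin k) ℂ) *
      Matrix.diagonal (fun i => (hH.eigenvalues i : ℂ)) *
      (hH.eigenvectorUnitary : Matrix (Fin k) (Fin k) ℂ)ᴴ := by
  have := hH.spectral_theorem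
  rw [← Matrix.star_eq_conjTranspose]
  exact this

lemma unitary_V1 {H : Matrix (Fin k) (Fin k) ℂ} (hH : H.IsHermitian) :
    (hH.eigenvectorUnitary : Matrix (Fin k) (Fin k) ℂ) *
      (hH.eigenvectorUnitary : Matrix (Fin k) (Fin k) ℂ)ᴴ = 1 := by
  rw [← Matrix.star_eq_conjTranspose]
  exact (Matrix.mem_unitaryGroup_iff).mp (hH.eigenvectorUnitary).2

lemma unitary_V2 {H : Matrix (Fin k) (Fin k) ℂ} (hH : H.IsHermitian) :
    (hH.eigenvectorUnitary : Matrix (Fin k) (Fin k) ℂ)ᴴ *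
      (hH.eigenvectorUnitary : Matrix (Fin k) (Fin k) ℂ) = 1 :=
  mul_eq_one_comm.mp (unitary_V1 hH)

lemma shift_spectral {H : Matrix (Fin k) (Fin k) ℂ} (hH : H.IsHermitian) (t : ℝ) :
    (t:ℂ) • 1 + H = (hH.eigenvectorUnitary : Matrix (Fin k) (Fin k) ℂ) *
      Matrix.diagonal (fun i => (t:ℂ) + (hH.eigenvalues i : ℂ)) *
      (hH.eigenvectorUnitary : Matrix (Fin k) (Fin k) ℂ)ᴴ := by
  set V := (hH.eigenvectorUnitary : Matrix (Fin k) (Fin k) ℂ)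
  have h1 : (t:ℂ) • (1 : Matrix (Fin k) (Fin k) ℂ) =
      V * Matrix.diagonal (fun _ => (t:ℂ)) * Vᴴ := by
    have hd : Matrix.diagonal (fun _ => (t:ℂ)) = (t:ℂ) • (1 : Matrix (Fin k) (Fin k) ℂ) := by
      ext i j
      by_cases h : i = j <;> simp [Matrix.diagonal_apply, Matrix.one_apply, h]
    rw [hd, Matrix.mul_smul, Matrix.smul_mul, Matrix.mul_one, unitary_V1 hH]
  calc (t:ℂ) • 1 + H = V * Matrix.diagonal (fun _ => (t:ℂ)) * Vᴴ +
        V * Matrix.diagonal (fun i => (hH.eigenvalues i : ℂ)) * Vᴴ := by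
        rw [← h1, ← herm_spectral hH]
    _ = _ := by
        rw [← Matrix.add_mul, ← Matrix.mul_add, Matrix.diagonal_add]


lemma quad_ge {H : Matrix (Fin k) (Fin k) ℂ} (hH : H.IsHermitian) {a : ℝ}
    (hlow : ∀ i, a ≤ hH.eigenvalues i) (y : Fin k → ℂ) :
    a * (star y ⬝ᵥ y).re ≤ (star y ⬝ᵥ (H *ᵥ y)).re := by
  set V := (hH.eigenvectorUnitary : Matrix (Fin k) (Fin k) ℂ) with hV
  set c := Vᴴ *ᵥ y with hc
  have hyc : star y ᵥ* V = star c := by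
    rw [hc, star_mulVec, Matrix.conjTranspose_conjTranspose]
  have h1 : star y ⬝ᵥ (H *ᵥ y) = star c ⬝ᵥ (Matrix.diagonal (fun i => (hH.eigenvalues i : ℂ)) *ᵥ c) := by
    conv_lhs => rw [herm_spectral hH]
    rw [← hV, ← Matrix.mulVec_mulVec, ← Matrix.mulVec_mulVec, Matrix.dotProduct_mulVec, hyc, hc]
  have h2 : star y ⬝ᵥ y = star c ⬝ᵥ c := by
    rw [hc, iso_dot]
    rw [Matrix.conjTranspose_conjTranspose]
    exact unitary_V1 hH
  rw [h1, h2]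
  rw [dotProduct, Complex.re_sum, dotProduct, Complex.re_sum, Finset.mul_sum]
  apply Finset.sum_le_sum
  intro i _
  have hterm : (star c i * (Matrix.diagonal (fun i => (hH.eigenvalues i : ℂ)) *ᵥ c) i) =
      ((hH.eigenvalues i : ℂ)) * (star c i * c i) := by
    rw [Matrix.mulVec_diagonal]; ring
  rw [hterm]
  have hsc : star c i * c i = (Complex.normSq (c i) : ℂ) := by
    simp [Pi.star_apply, Complex.normSq_eq_conj_mul_self]
  rw [hsc]
  have : ((hH.eigenvalues i : ℂ) * (Complex.normSq (c i) : ℂ)).re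
      = hH.eigenvalues i * Complex.normSq (c i) := by
    norm_cast
  rw [this]
  rw [Complex.ofReal_re]
  exact mul_le_mul_of_nonneg_right (hlow i) (Complex.normSq_nonneg _)

lemma compress_eig_low {A : Matrix (Fin n) (Fin n) ℂ} (hH : A.IsHermitian) {a : ℝ}
    (hlow : ∀ i, a ≤ hH.eigenvalues i) {U : Matrix (Fin n) (Fin m) ℂ} (hUU : Uᴴ * U = 1)
    (hG : (Uᴴ * A * U).IsHermitian) (i : Fin m) : a ≤ hG.eigenvalues i := by
  set x : Fin m → ℂ := ⇑(hG.eigenvectorBasis i) with hx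
  have hunit : (star x ⬝ᵥ x).re = 1 := by
    have hin : (inner ℂ (hG.eigenvectorBasis i) (hG.eigenvectorBasis i) : ℂ)
        = ((‖hG.eigenvectorBasis i‖ : ℂ)) ^ 2 := inner_self_eq_norm_sq_to_K _
    rw [EuclideanSpace.inner_eq_star_dotProduct, hG.eigenvectorBasis.orthonormal.1 i] at hin
    rw [hx, dotProduct_comm, hin]
    norm_num
  have heig := hG.eigenvalues_eq i
  have hdot : star x ⬝ᵥ ((Uᴴ * A * U) *ᵥ x) = star (U *ᵥ x) ⬝ᵥ (A *ᵥ (U *ᵥ x)) := by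
    rw [← Matrix.mulVec_mulVec, ← Matrix.mulVec_mulVec, Matrix.dotProduct_mulVec, ← star_mulVec]
  have hdot2 : star (U *ᵥ x) ⬝ᵥ (U *ᵥ x) = star x ⬝ᵥ x := iso_dot hUU x
  have hq := quad_ge hH hlow (U *ᵥ x)
  rw [hdot2] at hq
  calc a = a * (star x ⬝ᵥ x).re := by rw [hunit, mul_one]
    _ ≤ (star (U *ᵥ x) ⬝ᵥ (A *ᵥ (U *ᵥ x))).re := hq
    _ = hG.eigenvalues i := by rw [← hdot, heig]; rfl



lemma qpoly_monic (Ψ : Fin ℓ → Option ℂ) : (qpoly Ψ).Monic := by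
  apply monic_prod_of_monic
  intro j _
  cases hj : Ψ j with
  | none => simpa [hj] using monic_one
  | some ψ => simpa [hj] using monic_X_sub_C ψ

lemma qpoly_natDegree_le (Ψ : Fin ℓ → Option ℂ) : (qpoly Ψ).natDegree ≤ ℓ := by
  refine le_trans (natDegree_prod_le _ _) ?_
  calc ∑ j : Fin ℓ, ((Ψ j).elim 1 fun ψ => X - C ψ).natDegree ≤ ∑ _j : Fin ℓ, 1 := by
        apply Finset.sum_le_sum
        intro j _
        cases hj : Ψ j with
        | none => simp [hj]
        | some ψ => simp [hj, natDegree_X_sub_C]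
    _ = ℓ := by simp

lemma aeval_qpoly_isUnit {A : Matrix (Fin n) (Fin n) ℂ} (Ψ : Fin ℓ → Option ℂ)
    (hΨ : ∀ j ψ, Ψ j = some ψ → ψ ∉ spectrum ℂ A) : IsUnit (aeval A (qpoly Ψ)) := by
  rw [qpoly]
  apply Finset.prod_induction _ (fun g => IsUnit (aeval A g))
    (fun g h hg hh => by rw [_root_.map_mul]; exact hg.mul hh)
    (by rw [_root_.map_one]; exact isUnit_one)
  intro j _
  cases hj : Ψ j with
  | none => simpa [hj] using isUnit_one
  | some ψ =>
    have h1 : IsUnit (algebraMap ℂ (Matrix (Fin n) (Fin n) ℂ) ψ - A) :=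
      spectrum.notMem_iff.mp (hΨ j ψ hj)
    have h2 : aeval A ((some ψ).elim 1 fun ψ => (X : Polynomial ℂ) - C ψ) =
        -(algebraMap ℂ (Matrix (Fin n) (Fin n) ℂ) ψ - A) := by
      simp [aeval_X, aeval_C]
    rw [h2]
    exact h1.neg

lemma commute_aeval (A : Matrix (Fin n) (Fin n) ℂ) (g : Polynomial ℂ) :
    A * aeval A g = aeval A g * A := by
  have h1 := _root_.map_mul (aeval A) X g
  have h2 := _root_.map_mul (aeval A) g X
  rw [aeval_X] at h1 h2
  rw [← h1, ← h2, mul_comm X g]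

lemma commute_inv {A Q : Matrix (Fin n) (Fin n) ℂ} (hQ : IsUnit Q) (h : A * Q = Q * A) :
    A * Q⁻¹ = Q⁻¹ * A := by
  have hd := (Matrix.isUnit_iff_isUnit_det Q).mp hQ
  have h1 : Q * Q⁻¹ = 1 := Matrix.mul_nonsing_inv Q hd
  have h2 : Q⁻¹ * Q = 1 := Matrix.nonsing_inv_mul Q hd
  calc A * Q⁻¹ = Q⁻¹ * Q * (A * Q⁻¹) := by rw [h2, Matrix.one_mul]
    _ = Q⁻¹ * (Q * A) * Q⁻¹ := by simp only [Matrix.mul_assoc]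
    _ = Q⁻¹ * (A * Q) * Q⁻¹ := by rw [← h]
    _ = Q⁻¹ * A * (Q * Q⁻¹) := by simp only [Matrix.mul_assoc]
    _ = Q⁻¹ * A := by rw [h1, Matrix.mul_one]

lemma pow_commute_inv {A Q : Matrix (Fin n) (Fin n) ℂ} (hQ : IsUnit Q) (h : A * Q = Q * A)
    (i : ℕ) : A ^ i * Q⁻¹ = Q⁻¹ * A ^ i := by
  induction i with
  | zero => simp
  | succ i ih =>
    rw [pow_succ, Matrix.mul_assoc, commute_inv hQ h, ← Matrix.mul_assoc, ih, Matrix.mul_assoc]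

lemma mem_colSpan_mulVec {U : Matrix (Fin n) (Fin m) ℂ} (hUU : Uᴴ * U = 1)
    {x : Fin n → ℂ} (hx : x ∈ colSpan U) : U *ᵥ (Uᴴ *ᵥ x) = x := by
  rw [colSpan] at hx
  obtain ⟨c, hc⟩ := (Finsupp.mem_span_range_iff_exists_finsupp).mp hx
  have hxc : x = U *ᵥ (c : Fin m → ℂ) := by
    rw [← hc]
    funext i
    rw [Matrix.mulVec, dotProduct]
    rw [Finsupp.sum_fintype]
    · simp [Matrix.transpose_apply, mul_comm]
    · intro j; simp
  have hinner : Uᴴ *ᵥ (U *ᵥ (c : Fin m → ℂ)) = (c : Fin m → ℂ) := by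
    rw [Matrix.mulVec_mulVec, hUU, Matrix.one_mulVec]
  rw [hxc, hinner]

lemma col_transpose_mul (A : Matrix (Fin n) (Fin m) ℂ) (B : Matrix (Fin m) (Fin k) ℂ) (j : Fin k) :
    (A * B)ᵀ j = A *ᵥ (Bᵀ j) := by
  funext i
  simp [Matrix.transpose_apply, Matrix.mul_apply, Matrix.mulVec, dotProduct]

lemma col_proj {U : Matrix (Fin n) (Fin m) ℂ} (hUU : Uᴴ * U = 1)
    {M : Matrix (Fin n) (Fin k) ℂ} (h : ∀ j, Mᵀ j ∈ colSpan U) : U * (Uᴴ * M) = M := by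
  have : ∀ j, (U * (Uᴴ * M))ᵀ j = Mᵀ j := by
    intro j
    rw [col_transpose_mul, col_transpose_mul]
    rw [mem_colSpan_mulVec hUU (h j)]
  ext i j
  have := congrFun (this j) i
  simpa [Matrix.transpose_apply] using this



lemma hUk_of_hcol {A : Matrix (Fin n) (Fin n) ℂ} {U : Matrix (Fin n) (Fin m) ℂ}
    {Aℓ : Matrix (Fin m) (Fin m) ℂ} {w : Matrix (Fin n) (Fin s) ℂ}
    (hAℓ : Aℓ = Uᴴ * A * U)
    (hcol : ∀ k, k ≤ ℓ → U * (Uᴴ * (A ^ k * w)) = A ^ k * w) :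
    ∀ k, k ≤ ℓ + 1 → Uᴴ * (A ^ k * w) = Aℓ ^ k * (Uᴴ * w) := by
  intro k
  induction k with
  | zero => intro _; simp
  | succ k ih =>
    intro hk
    have hk' : k ≤ ℓ := Nat.lt_succ_iff.mp hk
    have ihk := ih (le_trans hk' (Nat.le_succ ℓ))
    calc Uᴴ * (A ^ (k+1) * w) = Uᴴ * (A * (A ^ k * w)) := by
          rw [pow_succ', Matrix.mul_assoc]
      _ = Uᴴ * (A * (U * (Uᴴ * (A ^ k * w)))) := by rw [hcol k hk']
      _ = (Uᴴ * A * U) * (Uᴴ * (A ^ k * w)) := by simp only [Matrix.mul_assoc]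
      _ = Aℓ * (Aℓ ^ k * (Uᴴ * w)) := by rw [← hAℓ, ihk]
      _ = Aℓ ^ (k+1) * (Uᴴ * w) := by rw [pow_succ', Matrix.mul_assoc]

lemma aeval_mul_right {A : Matrix (Fin n) (Fin n) ℂ} {w : Matrix (Fin n) (Fin s) ℂ}
    (g : Polynomial ℂ) (N : ℕ) (hg : g.natDegree < N) :
    aeval A g * w = ∑ i ∈ Finset.range N, g.coeff i • (A ^ i * w) := by
  rw [aeval_eq_sum_range' hg, Matrix.sum_mul]
  congr 1; funext i
  rw [Matrix.smul_mul]


lemma norm2_zero : norm2 (0 : Matrix (Fin m) (Fin n) ℂ) = 0 := by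
  unfold norm2
  rw [map_zero, map_zero, norm_zero]

lemma aeval_conj_diag {V : Matrix (Fin k) (Fin k) ℂ} (hV1 : V * Vᴴ = 1) (hV2 : Vᴴ * V = 1)
    (d : Fin k → ℂ) (g : Polynomial ℂ) :
    aeval (V * Matrix.diagonal d * Vᴴ) g =
      V * Matrix.diagonal (fun i => g.eval (d i)) * Vᴴ := by
  rw [conj_aeval hV1 hV2, aeval_diagonal]

lemma shift_ne {H : Matrix (Fin k) (Fin k) ℂ} (hH : H.IsHermitian) {a t : ℝ}
    (hta : 0 < t + a) (hlow : ∀ i, a ≤ hH.eigenvalues i) (i : Fin k) :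
    (t:ℂ) + (hH.eigenvalues i : ℂ) ≠ 0 := by
  have h1 : (t:ℂ) + (hH.eigenvalues i : ℂ) = ((t + hH.eigenvalues i : ℝ) : ℂ) := by push_cast; ring
  rw [h1, Complex.ofReal_ne_zero]
  have := hlow i
  intro hcontra
  linarith

lemma shift_inv_right {H : Matrix (Fin k) (Fin k) ℂ} (hH : H.IsHermitian) {a t : ℝ}
    (hta : 0 < t + a) (hlow : ∀ i, a ≤ hH.eigenvalues i) :
    ((t:ℂ) • 1 + H) * ((t:ℂ) • 1 + H)⁻¹ = 1 := by
  rw [shift_spectral hH t]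
  exact conj_mul_right_inv (unitary_V1 hH) (unitary_V2 hH) (shift_ne hH hta hlow)

lemma shift_inv_left {H : Matrix (Fin k) (Fin k) ℂ} (hH : H.IsHermitian) {a t : ℝ}
    (hta : 0 < t + a) (hlow : ∀ i, a ≤ hH.eigenvalues i) :
    ((t:ℂ) • 1 + H)⁻¹ * ((t:ℂ) • 1 + H) = 1 :=
  mul_eq_one_comm.mp (shift_inv_right hH hta hlow)

lemma shift_inv_norm {H : Matrix (Fin k) (Fin k) ℂ} (hH : H.IsHermitian) {a t : ℝ}
    (hta : 0 < t + a) (hlow : ∀ i, a ≤ hH.eigenvalues i) :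
    norm2 (((t:ℂ) • 1 + H)⁻¹) ≤ 1 / (t + a) := by
  have hrw : ((t:ℂ) • 1 + H)⁻¹ =
      (hH.eigenvectorUnitary : Matrix (Fin k) (Fin k) ℂ) *
      Matrix.diagonal (fun i => ((t:ℂ) + (hH.eigenvalues i : ℂ))⁻¹) *
      (hH.eigenvectorUnitary : Matrix (Fin k) (Fin k) ℂ)ᴴ := by
    rw [shift_spectral hH t]
    exact conj_inv (unitary_V1 hH) (unitary_V2 hH) (shift_ne hH hta hlow)
  rw [hrw]
  apply norm2_conj_diag_le (unitary_V2 hH) (by positivity)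
  intro i
  have h1 : (t:ℂ) + (hH.eigenvalues i : ℂ) = ((t + hH.eigenvalues i : ℝ) : ℂ) := by push_cast; ring
  rw [h1, ← Complex.ofReal_inv, Complex.norm_real, Real.norm_eq_abs]
  have h2 : 0 < t + hH.eigenvalues i := by have := hlow i; linarith
  rw [abs_of_pos (by positivity), one_div]
  exact inv_anti₀ hta (by have := hlow i; linarith)

end RKaux

/-- pointwise error bound for the parameter-dependent resolvent. -/
theorem rational_krylov_resolvent_bound
    {n s m ℓ : ℕ} (a b : ℝ) (ha : 0 < a) (hab : a ≤ b)
    (A : Matrix (Fin n) (Fin n) ℂ) (hA : A.PosDef)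
    (hspec : ∀ i, hA.1.eigenvalues i ∈ Set.Icc a b)
    (v : Matrix (Fin n) (Fin s) ℂ)
    (Ψ : Fin ℓ → Option ℂ)
    (hΨ : ∀ j ψ, Ψ j = some ψ → ψ ∉ spectrum ℂ A)
    (U : Matrix (Fin n) (Fin m) ℂ) (hU : IsONBasisOf U (RK ℓ A v Ψ))
    (Aℓ : Matrix (Fin m) (Fin m) ℂ) (hAℓ : Aℓ = Uᴴ * A * U)
    (vℓ : Matrix (Fin m) (Fin s) ℂ) (hvℓ : vℓ = Uᴴ * v)
    (t : ℝ) (ht : 0 ≤ t)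
    (p : Polynomial ℂ) (hp : p.natDegree ≤ ℓ)
    (M mm : ℝ) (hmm : 0 < mm)
    (hub : ∀ z : ℝ, z ∈ Set.Icc a b →
      ‖p.eval (z : ℂ) / (qpoly Ψ).eval (z : ℂ)‖ ≤ M)
    (hlb : ∀ z : ℝ, z ≤ 0 → (qpoly Ψ).eval (z : ℂ) ≠ 0 →
      mm ≤ ‖p.eval (z : ℂ) / (qpoly Ψ).eval (z : ℂ)‖) :
    norm2 (((t : ℂ) • 1 + A)⁻¹ * v - U * (((t : ℂ) • 1 + Aℓ)⁻¹ * vℓ)) ≤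
      (2 / (t + a)) * (M / mm) * norm2 v := by
  classical
  obtain ⟨hUU, hcolspan⟩ := hU
  subst hAℓ
  subst hvℓ
  have hH : A.IsHermitian := hA.1
  have hlowA : ∀ i, a ≤ hH.eigenvalues i := fun i => (hspec i).1
  have hta : 0 < t + a := by linarith
  have hM0 : 0 ≤ M := le_trans (norm_nonneg _) (hub a ⟨le_refl a, hab⟩)
  -- Q and w
  have hQu : IsUnit (aeval A (qpoly Ψ)) := RKaux.aeval_qpoly_isUnit Ψ hΨ
  set Q : Matrix (Fin n) (Fin n) ℂ := aeval A (qpoly Ψ) with hQdef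
  have hQd : IsUnit Q.det := (Matrix.isUnit_iff_isUnit_det Q).mp hQu
  have hQinv : Q * Q⁻¹ = 1 := Matrix.mul_nonsing_inv Q hQd
  have hQinv' : Q⁻¹ * Q = 1 := Matrix.nonsing_inv_mul Q hQd
  set w : Matrix (Fin n) (Fin s) ℂ := Q⁻¹ * v with hwdef
  have hQw : Q * w = v := by rw [hwdef, ← Matrix.mul_assoc, hQinv, Matrix.one_mul]
  have hcommQ : A * Q = Q * A := RKaux.commute_aeval A (qpoly Ψ)
  -- Krylov exactness
  have hmem : ∀ kk, kk ≤ ℓ → ∀ j : Fin s, ((A ^ kk * w)ᵀ j) ∈ colSpan U := by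
    intro kk hkk j
    rw [hcolspan, RK]
    apply Submodule.subset_span
    refine ⟨kk, hkk, j, ?_⟩
    rw [hwdef, ← Matrix.mul_assoc, RKaux.pow_commute_inv hQu hcommQ kk]
  have hcol : ∀ kk, kk ≤ ℓ → U * (Uᴴ * (A ^ kk * w)) = A ^ kk * w := fun kk hkk =>
    RKaux.col_proj hUU (hmem kk hkk)
  have hUk : ∀ kk, kk ≤ ℓ + 1 → Uᴴ * (A ^ kk * w) = (Uᴴ * A * U) ^ kk * (Uᴴ * w) :=
    RKaux.hUk_of_hcol rfl hcol
  have hAk : ∀ kk, kk ≤ ℓ → A ^ kk * w = U * ((Uᴴ * A * U) ^ kk * (Uᴴ * w)) := by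
    intro kk hkk
    rw [← hUk kk (le_trans hkk (Nat.le_succ ℓ))]
    exact (hcol kk hkk).symm
  have Lpoly2 : ∀ g : Polynomial ℂ, g.natDegree ≤ ℓ →
      Uᴴ * (aeval A g * w) = aeval (Uᴴ * A * U) g * (Uᴴ * w) := by
    intro g hg
    rw [RKaux.aeval_mul_right g (ℓ+1) (Nat.lt_succ_of_le hg),
      RKaux.aeval_mul_right g (ℓ+1) (Nat.lt_succ_of_le hg), Matrix.mul_sum]
    apply Finset.sum_congr rfl
    intro i hi
    rw [Matrix.mul_smul, hUk i (le_trans (Nat.lt_succ_iff.mp (Finset.mem_range.mp hi)) (Nat.le_succ ℓ))]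
  have Lpoly1 : ∀ g : Polynomial ℂ, g.natDegree ≤ ℓ →
      aeval A g * w = U * (aeval (Uᴴ * A * U) g * (Uᴴ * w)) := by
    intro g hg
    rw [RKaux.aeval_mul_right g (ℓ+1) (Nat.lt_succ_of_le hg),
      RKaux.aeval_mul_right g (ℓ+1) (Nat.lt_succ_of_le hg), Matrix.mul_sum]
    apply Finset.sum_congr rfl
    intro i hi
    rw [Matrix.mul_smul, hAk i (Nat.lt_succ_iff.mp (Finset.mem_range.mp hi))]
  -- resolvent facts
  have hTl : ((t:ℂ) • 1 + A)⁻¹ * ((t:ℂ) • 1 + A) = 1 := RKaux.shift_inv_left hH hta hlowA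
  have hTn : norm2 (((t:ℂ) • 1 + A)⁻¹) ≤ 1/(t+a) := RKaux.shift_inv_norm hH hta hlowA
  have hherm : (Uᴴ * A * U).IsHermitian := Matrix.isHermitian_conjTranspose_mul_mul U hH
  have hlowL : ∀ i, a ≤ hherm.eigenvalues i := RKaux.compress_eig_low hH hlowA hUU hherm
  have hTLl : ((t:ℂ) • 1 + Uᴴ * A * U)⁻¹ * ((t:ℂ) • 1 + Uᴴ * A * U) = 1 :=
    RKaux.shift_inv_left hherm hta hlowL
  have hTLn : norm2 (((t:ℂ) • 1 + Uᴴ * A * U)⁻¹) ≤ 1/(t+a) :=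
    RKaux.shift_inv_norm hherm hta hlowL
  -- spectral representation of Q⁻¹ * p(A)
  set V : Matrix (Fin n) (Fin n) ℂ := (hH.eigenvectorUnitary : Matrix (Fin n) (Fin n) ℂ) with hVdef
  have hV1 : V * Vᴴ = 1 := RKaux.unitary_V1 hH
  have hV2 : Vᴴ * V = 1 := RKaux.unitary_V2 hH
  have hAspec : A = V * Matrix.diagonal (fun i => (hH.eigenvalues i : ℂ)) * Vᴴ :=
    RKaux.herm_spectral hH
  have heigspec : ∀ i, ((hH.eigenvalues i : ℝ) : ℂ) ∈ spectrum ℂ A := fun i =>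
    spectrum.algebraMap_mem ℂ (hH.eigenvalues_mem_spectrum_real i)
  have hqeig : ∀ i, (qpoly Ψ).eval ((hH.eigenvalues i : ℂ)) ≠ 0 := by
    intro i hzero
    rw [qpoly, eval_prod] at hzero
    obtain ⟨j, _, hj⟩ := Finset.prod_eq_zero_iff.mp hzero
    cases hΨj : Ψ j with
    | none => rw [hΨj] at hj; simp at hj
    | some ψ =>
      rw [hΨj] at hj
      simp only [Option.elim, eval_sub, eval_X, eval_C] at hj
      have hψ : ψ = ((hH.eigenvalues i : ℝ) : ℂ) := by
        have := sub_eq_zero.mp hj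
        exact this.symm
      exact hΨ j ψ hΨj (hψ ▸ heigspec i)
  have hQspec : Q = V * Matrix.diagonal (fun i => (qpoly Ψ).eval ((hH.eigenvalues i : ℂ))) * Vᴴ := by
    rw [hQdef]
    conv_lhs => rw [hAspec]
    exact RKaux.aeval_conj_diag hV1 hV2 _ (qpoly Ψ)
  have hpspec : aeval A p = V * Matrix.diagonal (fun i => p.eval ((hH.eigenvalues i : ℂ))) * Vᴴ := by
    conv_lhs => rw [hAspec]
    exact RKaux.aeval_conj_diag hV1 hV2 _ p
  have hRn : norm2 (Q⁻¹ * aeval A p) ≤ M := by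
    have hrw : Q⁻¹ * aeval A p = V * Matrix.diagonal
        (fun i => ((qpoly Ψ).eval ((hH.eigenvalues i : ℂ)))⁻¹ * p.eval ((hH.eigenvalues i : ℂ))) * Vᴴ := by
      rw [hQspec, RKaux.conj_inv hV1 hV2 hqeig, hpspec, RKaux.conj_mul hV2,
        Matrix.diagonal_mul_diagonal]
    rw [hrw]
    apply RKaux.norm2_conj_diag_le hV2 hM0
    intro i
    rw [inv_mul_eq_div]
    exact hub (hH.eigenvalues i) ⟨(hspec i).1, (hspec i).2⟩
  have hcommPQ : aeval A p * Q⁻¹ = Q⁻¹ * aeval A p := by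
    apply RKaux.commute_inv hQu
    have h1 : aeval A p * Q = aeval A (p * qpoly Ψ) := by rw [hQdef, _root_.map_mul]
    have h2 : Q * aeval A p = aeval A (qpoly Ψ * p) := by rw [hQdef, _root_.map_mul]
    rw [h1, h2, mul_comm p (qpoly Ψ)]
  -- shift polynomial
  have haevT : ∀ (kk : ℕ) (B : Matrix (Fin kk) (Fin kk) ℂ),
      aeval B (X - C (((-t : ℝ) : ℂ))) = (t:ℂ) • 1 + B := by
    intro kk B
    rw [map_sub, aeval_X, aeval_C, Algebra.algebraMap_eq_smul_one, Complex.ofReal_neg, neg_smul,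
      sub_neg_eq_add, add_comm]
  have hvl : Uᴴ * v = aeval (Uᴴ * A * U) (qpoly Ψ) * (Uᴴ * w) := by
    rw [← hQw, hQdef]
    exact Lpoly2 (qpoly Ψ) (RKaux.qpoly_natDegree_le Ψ)
  by_cases h0 : (qpoly Ψ).eval (((-t : ℝ) : ℂ)) = 0
  · -- exact case: -t is a pole
    obtain ⟨P, hPfac⟩ := (dvd_iff_isRoot.mpr h0 : (X - C (((-t : ℝ) : ℂ))) ∣ qpoly Ψ)
    have hqne : qpoly Ψ ≠ 0 := (RKaux.qpoly_monic Ψ).ne_zero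
    have hPdeg : P.natDegree ≤ ℓ :=
      le_trans (natDegree_le_of_dvd (Dvd.intro_left _ hPfac.symm) hqne) (RKaux.qpoly_natDegree_le Ψ)
    have hqfA : Q = ((t:ℂ) • 1 + A) * aeval A P := by
      rw [hQdef]
      conv_lhs => rw [hPfac]
      rw [_root_.map_mul, haevT n A]
    have hqfL : aeval (Uᴴ * A * U) (qpoly Ψ) =
        ((t:ℂ) • 1 + Uᴴ * A * U) * aeval (Uᴴ * A * U) P := by
      conv_lhs => rw [hPfac]
      rw [_root_.map_mul, haevT m _]
    have he1 : ((t:ℂ) • 1 + A)⁻¹ * v = aeval A P * w := by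
      have hv : v = ((t:ℂ) • 1 + A) * (aeval A P * w) := by
        rw [← Matrix.mul_assoc, ← hqfA, hQw]
      rw [hv, ← Matrix.mul_assoc, hTl, Matrix.one_mul]
    have he2 : U * (((t:ℂ) • 1 + Uᴴ * A * U)⁻¹ * (Uᴴ * v)) = aeval A P * w := by
      rw [hvl, hqfL, Matrix.mul_assoc ((t:ℂ) • 1 + Uᴴ * A * U) _ _, ← Matrix.mul_assoc _ (((t:ℂ) • 1 + Uᴴ * A * U)) _, hTLl, Matrix.one_mul]
      exact (Lpoly1 P hPdeg).symm
    rw [he1, he2, sub_self, RKaux.norm2_zero]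
    have h1 : (0:ℝ) ≤ 2/(t+a) := by positivity
    have h2 : (0:ℝ) ≤ M/mm := div_nonneg hM0 (le_of_lt hmm)
    exact mul_nonneg (mul_nonneg h1 h2) (RKaux.norm2_nonneg v)
  · -- generic case
    set c : ℂ := p.eval (((-t : ℝ) : ℂ)) / (qpoly Ψ).eval (((-t : ℝ) : ℂ)) with hcdef
    have hcabs : mm ≤ ‖c‖ := hlb (-t) (neg_nonpos.mpr ht) h0
    have hcne : c ≠ 0 := by
      intro h
      rw [h] at hcabs
      simp at hcabs
      linarith
    have hpne : p.eval (((-t : ℝ) : ℂ)) ≠ 0 := by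
      intro h
      apply hcne
      rw [hcdef, h, zero_div]
    set N : Polynomial ℂ := qpoly Ψ - C c⁻¹ * p with hNdef
    have hNroot : N.IsRoot (((-t : ℝ) : ℂ)) := by
      rw [hNdef]
      simp only [IsRoot, eval_sub, eval_mul, eval_C]
      rw [hcdef, inv_div, div_mul_cancel₀ _ hpne, sub_self]
    obtain ⟨P, hPfac⟩ := dvd_iff_isRoot.mpr hNroot
    have hNdeg : N.natDegree ≤ ℓ := by
      rw [hNdef]
      refine le_trans (natDegree_sub_le _ _) (max_le (RKaux.qpoly_natDegree_le Ψ) ?_)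
      exact le_trans (natDegree_C_mul_le _ _) hp
    have hPdeg : P.natDegree ≤ ℓ := by
      by_cases hN : N = 0
      · have hP0 : P = 0 := by
          rcases mul_eq_zero.mp (hN ▸ hPfac).symm with h | h
          · exact absurd h (X_sub_C_ne_zero _)
          · exact h
        rw [hP0]
        simp
      · exact le_trans (natDegree_le_of_dvd (Dvd.intro_left _ hPfac.symm) hN) hNdeg
    have hsplitA : Q = ((t:ℂ) • 1 + A) * aeval A P + c⁻¹ • aeval A p := by
      have h1 : aeval A N = ((t:ℂ) • 1 + A) * aeval A P := by
        rw [hPfac, _root_.map_mul, haevT n A]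
      have h2 : aeval A N = Q - c⁻¹ • aeval A p := by
        rw [hNdef, map_sub, _root_.map_mul, aeval_C, hQdef, Algebra.algebraMap_eq_smul_one,
          smul_mul_assoc, one_mul]
      have h3 : Q - c⁻¹ • aeval A p = ((t:ℂ) • 1 + A) * aeval A P := by rw [← h2, h1]
      exact sub_eq_iff_eq_add.mp h3
    have hsplitL : aeval (Uᴴ * A * U) (qpoly Ψ) =
        ((t:ℂ) • 1 + Uᴴ * A * U) * aeval (Uᴴ * A * U) P + c⁻¹ • aeval (Uᴴ * A * U) p := by
      have h1 : aeval (Uᴴ * A * U) N = ((t:ℂ) • 1 + Uᴴ * A * U) * aeval (Uᴴ * A * U) P := by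
        rw [hPfac, _root_.map_mul, haevT m _]
      have h2 : aeval (Uᴴ * A * U) N = aeval (Uᴴ * A * U) (qpoly Ψ) - c⁻¹ • aeval (Uᴴ * A * U) p := by
        rw [hNdef, map_sub, _root_.map_mul, aeval_C, Algebra.algebraMap_eq_smul_one,
          smul_mul_assoc, one_mul]
      have h3 : aeval (Uᴴ * A * U) (qpoly Ψ) - c⁻¹ • aeval (Uᴴ * A * U) p =
          ((t:ℂ) • 1 + Uᴴ * A * U) * aeval (Uᴴ * A * U) P := by rw [← h2, h1]
      exact sub_eq_iff_eq_add.mp h3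
    have he1 : ((t:ℂ) • 1 + A)⁻¹ * v =
        aeval A P * w + c⁻¹ • (((t:ℂ) • 1 + A)⁻¹ * (aeval A p * w)) := by
      have hv : v = ((t:ℂ) • 1 + A) * (aeval A P * w) + c⁻¹ • (aeval A p * w) := by
        rw [← hQw, hsplitA, Matrix.add_mul, Matrix.smul_mul, Matrix.mul_assoc]
      rw [hv, Matrix.mul_add, ← Matrix.mul_assoc, hTl, Matrix.one_mul, Matrix.mul_smul]
    have he2 : ((t:ℂ) • 1 + Uᴴ * A * U)⁻¹ * (Uᴴ * v) =
        aeval (Uᴴ * A * U) P * (Uᴴ * w) +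
          c⁻¹ • (((t:ℂ) • 1 + Uᴴ * A * U)⁻¹ * (aeval (Uᴴ * A * U) p * (Uᴴ * w))) := by
      have hv : Uᴴ * v = ((t:ℂ) • 1 + Uᴴ * A * U) * (aeval (Uᴴ * A * U) P * (Uᴴ * w)) +
          c⁻¹ • (aeval (Uᴴ * A * U) p * (Uᴴ * w)) := by
        rw [hvl, hsplitL, Matrix.add_mul, Matrix.smul_mul, Matrix.mul_assoc]
      rw [hv, Matrix.mul_add, ← Matrix.mul_assoc, hTLl, Matrix.one_mul, Matrix.mul_smul]
    have hPA : aeval A P * w = U * (aeval (Uᴴ * A * U) P * (Uᴴ * w)) := Lpoly1 P hPdeg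
    have hpw : aeval (Uᴴ * A * U) p * (Uᴴ * w) = Uᴴ * (aeval A p * w) := (Lpoly2 p hp).symm
    have herr : ((t:ℂ) • 1 + A)⁻¹ * v - U * (((t:ℂ) • 1 + Uᴴ * A * U)⁻¹ * (Uᴴ * v)) =
        c⁻¹ • (((t:ℂ) • 1 + A)⁻¹ * (aeval A p * w) -
          U * (((t:ℂ) • 1 + Uᴴ * A * U)⁻¹ * (Uᴴ * (aeval A p * w)))) := by
      rw [he1, he2, hpw, Matrix.mul_add, hPA, Matrix.mul_smul, smul_sub]
      abel
    rw [herr, RKaux.norm2_smul]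
    -- norm bounds
    have hu : norm2 (aeval A p * w) ≤ M * norm2 v := by
      have hrw : aeval A p * w = (Q⁻¹ * aeval A p) * v := by
        rw [hwdef, ← Matrix.mul_assoc, hcommPQ]
      rw [hrw]
      exact le_trans (RKaux.norm2_mul_le _ _) (mul_le_mul_of_nonneg_right hRn (RKaux.norm2_nonneg v))
    have hMv : 0 ≤ M * norm2 v := mul_nonneg hM0 (RKaux.norm2_nonneg v)
    have hb1 : norm2 (((t:ℂ) • 1 + A)⁻¹ * (aeval A p * w)) ≤ (1/(t+a)) * (M * norm2 v) := by
      refine le_trans (RKaux.norm2_mul_le _ _) ?_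
      exact mul_le_mul hTn hu (RKaux.norm2_nonneg _) (by positivity)
    have hb2 : norm2 (U * (((t:ℂ) • 1 + Uᴴ * A * U)⁻¹ * (Uᴴ * (aeval A p * w)))) ≤
        (1/(t+a)) * (M * norm2 v) := by
      refine le_trans (RKaux.norm2_isoL_le hUU _) ?_
      refine le_trans (RKaux.norm2_mul_le _ _) ?_
      have hUu : norm2 (Uᴴ * (aeval A p * w)) ≤ M * norm2 v := by
        refine le_trans (RKaux.norm2_mul_le _ _) ?_
        have h1 : norm2 Uᴴ ≤ 1 := by
          rw [RKaux.norm2_conjTranspose]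
          exact RKaux.norm2_iso_le_one hUU
        calc norm2 Uᴴ * norm2 (aeval A p * w) ≤ 1 * (M * norm2 v) :=
              mul_le_mul h1 hu (RKaux.norm2_nonneg _) zero_le_one
          _ = M * norm2 v := one_mul _
      exact mul_le_mul hTLn hUu (RKaux.norm2_nonneg _) (by positivity)
    have hsum : norm2 (((t:ℂ) • 1 + A)⁻¹ * (aeval A p * w) -
        U * (((t:ℂ) • 1 + Uᴴ * A * U)⁻¹ * (Uᴴ * (aeval A p * w)))) ≤
        (1/(t+a)) * (M * norm2 v) + (1/(t+a)) * (M * norm2 v) :=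
      le_trans (RKaux.norm2_sub_le _ _) (add_le_add hb1 hb2)
    have hcinv : ‖c⁻¹‖ ≤ 1/mm := by
      rw [norm_inv, one_div]
      exact inv_anti₀ hmm hcabs
    calc ‖c⁻¹‖ * norm2 (((t:ℂ) • 1 + A)⁻¹ * (aeval A p * w) -
          U * (((t:ℂ) • 1 + Uᴴ * A * U)⁻¹ * (Uᴴ * (aeval A p * w)))) ≤
        (1/mm) * ((1/(t+a)) * (M * norm2 v) + (1/(t+a)) * (M * norm2 v)) := by
          refine mul_le_mul hcinv hsum (RKaux.norm2_nonneg _) (by positivity)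
      _ = 2/(t+a) * (M/mm) * norm2 v := by
          field_simp
          ring
end
end

section
/- Let 0 < a ≤ b, ℓ ≥ 1, γ₁,…,γ_ℓ ∈ [a,b], κ := b/a, and define θ(s) := −2·∑_{j=1}^ℓ arctan(s/γⱼ) for s ≥ 0. Define f(t) := 1/2 + ((−1)^ℓ/π)·lim_{T→∞} ∫₀^T sin(st + θ(s))/s ds (the improper integral converges for every t > 0). Then for every t > 0, |f(t)| ≤ 2.23 + (2/π)·log(4ℓ·√(κ/π)). (The function f is the inverse Laplace transform of r̂(s) = (1/s)·∏_{j=1}^ℓ (γⱼ − s)/(γⱼ + s).) -/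
open Matrix Polynomial Set MeasureTheory Filter Topology
open scoped ComplexOrder ENNReal NNReal

noncomputable section

namespace ILT

open Real intervalIntegral

/-- kernel: antiderivative data for `exp(-(x*u)) * sin u` in `u`. -/
def G (x u : ℝ) : ℝ := Real.exp (-(x*u)) * (x * Real.sin u + Real.cos u) / (1 + x^2)

/-- `K c = ∫_c^∞ sin u / u du`, given by its Laplace-transform representation. -/
def K (c : ℝ) : ℝ := ∫ x in Ioi (0:ℝ), G x c

lemma hasDerivAt_negG (x u : ℝ) :
    HasDerivAt (fun v => -G x v) (Real.exp (-(x*u)) * Real.sin u) u := by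
  have h1 : HasDerivAt (fun v : ℝ => -(x*v)) (-x) u := by
    simpa using ((hasDerivAt_id u).const_mul x).fun_neg
  have hexp : HasDerivAt (fun v : ℝ => Real.exp (-(x*v))) (Real.exp (-(x*u)) * (-x)) u :=
    (Real.hasDerivAt_exp _).comp u h1
  have hsin : HasDerivAt (fun v : ℝ => x * Real.sin v + Real.cos v)
      (x * Real.cos u - Real.sin u) u := by
    simpa [sub_eq_add_neg] using ((Real.hasDerivAt_sin u).const_mul x).fun_add (Real.hasDerivAt_cos u)
  have hne : (1:ℝ) + x^2 ≠ 0 := by positivity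
  have h2 := ((hexp.fun_mul hsin).div_const (1 + x^2)).fun_neg
  refine h2.congr_deriv ?_
  field_simp
  ring

lemma G_cont (c : ℝ) : Continuous (fun x => G x c) := by
  unfold G
  fun_prop (disch := intro x; positivity)

lemma inner_integral (x : ℝ) {c d : ℝ} (h : c ≤ d) :
    ∫ u in c..d, Real.exp (-(x*u)) * Real.sin u = G x c - G x d := by
  have hcont : Continuous (fun u : ℝ => Real.exp (-(x*u)) * Real.sin u) := by fun_prop
  have := intervalIntegral.integral_eq_sub_of_hasDerivAt
    (f := fun v => -G x v) (fun u _ => hasDerivAt_negG x u)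
    (hcont.intervalIntegrable c d)
  rw [this]; ring

lemma integrableOn_exp_neg_mul {c : ℝ} (hc : 0 < c) :
    IntegrableOn (fun x => Real.exp (-(c*x))) (Ioi (0:ℝ)) := by
  simpa [neg_mul] using exp_neg_integrableOn_Ioi 0 hc

lemma integral_exp_neg_mul {c : ℝ} (hc : 0 < c) :
    ∫ x in Ioi (0:ℝ), Real.exp (-(c*x)) = 1/c := by
  have hderiv : ∀ x ∈ Ioi (0:ℝ), HasDerivAt (fun y => -Real.exp (-(c*y))/c) (Real.exp (-(c*x))) x := by
    intro x _
    have h1 : HasDerivAt (fun y : ℝ => -(c*y)) (-c) x := by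
      simpa using ((hasDerivAt_id x).const_mul c).fun_neg
    have := (((Real.hasDerivAt_exp (-(c*x))).comp x h1).fun_neg).div_const c
    refine this.congr_deriv ?_
    field_simp
  have htend : Tendsto (fun y => -Real.exp (-(c*y))/c) atTop (𝓝 0) := by
    have h1 : Tendsto (fun y : ℝ => -(c*y)) atTop atBot := by
      have h0 : Tendsto (fun y : ℝ => c*y) atTop atTop := tendsto_id.const_mul_atTop hc
      simpa using tendsto_neg_atBot_iff.mpr h0
    have := (Real.tendsto_exp_atBot.comp h1).neg.div_const c
    simpa using this
  have hcont : ContinuousWithinAt (fun y => -Real.exp (-(c*y))/c) (Ici (0:ℝ)) 0 := by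
    apply Continuous.continuousWithinAt; fun_prop
  rw [integral_Ioi_of_hasDerivAt_of_tendsto hcont hderiv (integrableOn_exp_neg_mul hc) htend]
  simp
  ring


lemma integrableOn_mul_exp_neg_mul {c : ℝ} (hc : 0 < c) :
    IntegrableOn (fun x => x * Real.exp (-(c*x))) (Ioi (0:ℝ)) := by
  apply Integrable.mono' (((integrableOn_exp_neg_mul (half_pos hc)).const_mul (2/c)))
  · apply Continuous.aestronglyMeasurable; fun_prop
  · filter_upwards [ae_restrict_mem measurableSet_Ioi] with x hx
    have hx0 : (0:ℝ) < x := hx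
    have h1 : c/2 * x ≤ Real.exp (c/2*x) := by
      have := Real.add_one_le_exp (c/2*x); nlinarith
    have h2 : x * Real.exp (-(c*x)) ≤ 2/c * Real.exp (-(c/2*x)) := by
      rw [show -(c*x) = -(c/2*x) + -(c/2*x) by ring, Real.exp_add]
      have h3 : x ≤ 2/c * Real.exp (c/2*x) := by
        rw [div_mul_eq_mul_div, le_div_iff₀ hc]; nlinarith
      calc x * (Real.exp (-(c/2*x)) * Real.exp (-(c/2*x)))
          ≤ (2/c * Real.exp (c/2*x)) * (Real.exp (-(c/2*x)) * Real.exp (-(c/2*x))) := by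
            apply mul_le_mul_of_nonneg_right h3 (by positivity)
        _ = 2/c * Real.exp (-(c/2*x)) := by
            simp only [mul_assoc, ← Real.exp_add]; congr 2; ring
    calc ‖x * Real.exp (-(c*x))‖ = x * Real.exp (-(c*x)) := by
          rw [Real.norm_eq_abs, abs_of_nonneg (by positivity)]
      _ ≤ _ := h2

lemma integral_mul_exp_neg_mul {c : ℝ} (hc : 0 < c) :
    ∫ x in Ioi (0:ℝ), x * Real.exp (-(c*x)) = 1/c^2 := by
  have hderiv : ∀ x ∈ Ioi (0:ℝ),
      HasDerivAt (fun y => -((y/c + 1/c^2) * Real.exp (-(c*y)))) (x * Real.exp (-(c*x))) x := by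
    intro x _
    have h1 : HasDerivAt (fun y : ℝ => -(c*y)) (-c) x := by
      simpa using ((hasDerivAt_id x).const_mul c).fun_neg
    have hexp : HasDerivAt (fun y : ℝ => Real.exp (-(c*y))) (Real.exp (-(c*x)) * (-c)) x :=
      (Real.hasDerivAt_exp _).comp x h1
    have hlin : HasDerivAt (fun y : ℝ => y/c + 1/c^2) (1/c) x := by
      have := ((hasDerivAt_id x).div_const c).add_const (1/c^2)
      simpa [one_div] using this
    have := (hlin.fun_mul hexp).fun_neg
    refine this.congr_deriv ?_
    field_simp
    ring
  have htend : Tendsto (fun y => -((y/c + 1/c^2) * Real.exp (-(c*y)))) atTop (𝓝 0) := by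
    have hy : Tendsto (fun y : ℝ => c * y) atTop atTop := tendsto_id.const_mul_atTop hc
    have h1 : Tendsto (fun y : ℝ => (c*y) * Real.exp (-(c*y))) atTop (𝓝 0) := by
      have := (tendsto_pow_mul_exp_neg_atTop_nhds_zero 1).comp hy
      simpa [Function.comp_def] using this
    have h2 : Tendsto (fun y : ℝ => Real.exp (-(c*y))) atTop (𝓝 0) := by
      have h0 : Tendsto (fun y : ℝ => -(c*y)) atTop atBot := by
        simpa using tendsto_neg_atBot_iff.mpr hy
      exact Real.tendsto_exp_atBot.comp h0
    have h3 : Tendsto (fun y : ℝ => (1/c^2) * ((c*y) * Real.exp (-(c*y))) + (1/c^2) * Real.exp (-(c*y)))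
        atTop (𝓝 ((1/c^2) * 0 + (1/c^2) * 0)) := ((h1.const_mul _).add (h2.const_mul _))
    simp only [mul_zero, add_zero] at h3
    have h4 := h3.neg
    rw [neg_zero] at h4
    apply h4.congr'
    filter_upwards with y
    have hc2 : (c:ℝ)^2 ≠ 0 := by positivity
    field_simp
  have hcont : ContinuousWithinAt (fun y => -((y/c + 1/c^2) * Real.exp (-(c*y)))) (Ici (0:ℝ)) 0 := by
    apply Continuous.continuousWithinAt; fun_prop
  rw [integral_Ioi_of_hasDerivAt_of_tendsto hcont hderiv (integrableOn_mul_exp_neg_mul hc) htend]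
  norm_num

lemma integrableOn_inv_one_add_sq : IntegrableOn (fun x : ℝ => (1+x^2)⁻¹) (Ioi (0:ℝ)) := by
  have := integrable_inv_one_add_sq
  exact this.integrableOn

lemma integral_inv_one_add_sq_Ioi : ∫ x in Ioi (0:ℝ), (1+x^2)⁻¹ = π/2 := by
  have hderiv : ∀ x ∈ Ioi (0:ℝ), HasDerivAt Real.arctan ((1+x^2)⁻¹) x := by
    intro x _; simpa [one_div] using Real.hasDerivAt_arctan x
  have htend : Tendsto Real.arctan atTop (𝓝 (π/2)) :=
    Real.tendsto_arctan_atTop.mono_right nhdsWithin_le_nhds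
  have hcont : ContinuousWithinAt Real.arctan (Ici (0:ℝ)) 0 :=
    Real.continuous_arctan.continuousWithinAt
  rw [integral_Ioi_of_hasDerivAt_of_tendsto hcont hderiv integrableOn_inv_one_add_sq htend]
  simp


lemma G_abs_le {c : ℝ} (hc : 0 < c) {x : ℝ} (hx : 0 < x) :
    |G x c| ≤ Real.exp (-(c*x)) * (x * |Real.sin c| + |Real.cos c|) / (1+x^2) := by
  have hD : (0:ℝ) < 1 + x^2 := by positivity
  unfold G
  rw [abs_div, abs_of_pos hD, abs_mul, Real.abs_exp, show x*c = c*x from mul_comm x c]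
  have hnum : |x * Real.sin c + Real.cos c| ≤ x * |Real.sin c| + |Real.cos c| := by
    calc |x * Real.sin c + Real.cos c| ≤ |x * Real.sin c| + |Real.cos c| := abs_add_le _ _
      _ = x * |Real.sin c| + |Real.cos c| := by rw [abs_mul, abs_of_pos hx]
  gcongr rexp (-(c*x)) * ?_ / (1+x^2)

lemma integrableOn_G {c : ℝ} (hc : 0 < c) : IntegrableOn (fun x => G x c) (Ioi (0:ℝ)) := by
  apply Integrable.mono' ((integrableOn_exp_neg_mul hc).const_mul 2)
  · exact (G_cont c).aestronglyMeasurable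
  · filter_upwards [ae_restrict_mem measurableSet_Ioi] with x hx
    have hx0 : (0:ℝ) < x := hx
    have hD : (0:ℝ) < 1 + x^2 := by positivity
    have h1 := G_abs_le hc hx0
    have hs : |Real.sin c| ≤ 1 := Real.abs_sin_le_one c
    have hco : |Real.cos c| ≤ 1 := Real.abs_cos_le_one c
    have h2 : Real.exp (-(c*x)) * (x * |Real.sin c| + |Real.cos c|) / (1+x^2)
        ≤ 2 * Real.exp (-(c*x)) := by
      rw [div_le_iff₀ hD]
      have he : (0:ℝ) < Real.exp (-(c*x)) := Real.exp_pos _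
      nlinarith [mul_le_mul_of_nonneg_left hs (mul_nonneg he.le hx0.le),
        mul_le_mul_of_nonneg_left hco he.le,
        mul_le_mul_of_nonneg_left (show x+1 ≤ 2*(1+x^2) by nlinarith [sq_nonneg (x-1)]) he.le]
    calc ‖G x c‖ ≤ _ := h1
      _ ≤ _ := h2

lemma K_bound1 {c : ℝ} (hc : 0 < c) :
    |K c| ≤ |Real.cos c| * (π/2) + |Real.sin c| * (1/(2*c)) := by
  have hint1 : IntegrableOn (fun x : ℝ => |Real.cos c| * (1+x^2)⁻¹) (Ioi 0) :=
    integrableOn_inv_one_add_sq.const_mul _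
  have hint2 : IntegrableOn (fun x : ℝ => |Real.sin c|/2 * Real.exp (-(c*x))) (Ioi 0) :=
    (integrableOn_exp_neg_mul hc).const_mul _
  have hb : ∀ᵐ x ∂(volume.restrict (Ioi (0:ℝ))),
      ‖G x c‖ ≤ |Real.cos c| * (1+x^2)⁻¹ + |Real.sin c|/2 * Real.exp (-(c*x)) := by
    filter_upwards [ae_restrict_mem measurableSet_Ioi] with x hx
    have hx0 : (0:ℝ) < x := hx
    have hD : (0:ℝ) < 1 + x^2 := by positivity
    have h1 := G_abs_le hc hx0
    have he1 : Real.exp (-(c*x)) ≤ 1 := Real.exp_le_one_iff.mpr (by nlinarith)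
    have he0 : (0:ℝ) < Real.exp (-(c*x)) := Real.exp_pos _
    have hs0 : (0:ℝ) ≤ |Real.sin c| := abs_nonneg _
    have hc0 : (0:ℝ) ≤ |Real.cos c| := abs_nonneg _
    have split : Real.exp (-(c*x)) * (x * |Real.sin c| + |Real.cos c|) / (1+x^2)
        = Real.exp (-(c*x)) * (x * |Real.sin c|) / (1+x^2)
          + Real.exp (-(c*x)) * |Real.cos c| / (1+x^2) := by ring
    have t1 : Real.exp (-(c*x)) * (x * |Real.sin c|) / (1+x^2)
        ≤ |Real.sin c|/2 * Real.exp (-(c*x)) := by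
      rw [div_le_iff₀ hD]
      nlinarith [mul_le_mul_of_nonneg_left (show 2*x ≤ 1+x^2 by nlinarith [sq_nonneg (x-1)])
        (mul_nonneg (mul_nonneg he0.le hs0) (by norm_num : (0:ℝ) ≤ 1/2))]
    have t2 : Real.exp (-(c*x)) * |Real.cos c| / (1+x^2) ≤ |Real.cos c| * (1+x^2)⁻¹ := by
      rw [div_le_iff₀ hD, mul_assoc, inv_mul_cancel₀ hD.ne', mul_one]
      nlinarith
    calc ‖G x c‖ = |G x c| := rfl
      _ ≤ _ := h1
      _ = _ := split
      _ ≤ _ := by linarith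
  have hint : Integrable (fun x : ℝ => |Real.cos c| * (1+x^2)⁻¹ + |Real.sin c|/2 * Real.exp (-(c*x)))
      (volume.restrict (Ioi 0)) := by exact hint1.add hint2
  have h := MeasureTheory.norm_integral_le_of_norm_le hint hb
  rw [MeasureTheory.integral_add hint1 hint2, MeasureTheory.integral_const_mul,
    MeasureTheory.integral_const_mul, integral_inv_one_add_sq_Ioi, integral_exp_neg_mul hc] at h
  calc |K c| = ‖∫ x in Ioi (0:ℝ), G x c‖ := rfl
    _ ≤ _ := h
    _ = |Real.cos c| * (π/2) + |Real.sin c| * (1/(2*c)) := by ring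

lemma K_bound2 {c : ℝ} (hc : 0 < c) :
    |K c| ≤ |Real.cos c| * (1/c) + |Real.sin c| * (1/c^2) := by
  have hint1 : IntegrableOn (fun x : ℝ => |Real.cos c| * Real.exp (-(c*x))) (Ioi 0) :=
    (integrableOn_exp_neg_mul hc).const_mul _
  have hint2 : IntegrableOn (fun x : ℝ => |Real.sin c| * (x * Real.exp (-(c*x)))) (Ioi 0) :=
    (integrableOn_mul_exp_neg_mul hc).const_mul _
  have hb : ∀ᵐ x ∂(volume.restrict (Ioi (0:ℝ))),
      ‖G x c‖ ≤ |Real.cos c| * Real.exp (-(c*x)) + |Real.sin c| * (x * Real.exp (-(c*x))) := by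
    filter_upwards [ae_restrict_mem measurableSet_Ioi] with x hx
    have hx0 : (0:ℝ) < x := hx
    have hD : (1:ℝ) ≤ 1 + x^2 := by nlinarith [sq_nonneg x]
    have h1 := G_abs_le hc hx0
    have he0 : (0:ℝ) < Real.exp (-(c*x)) := Real.exp_pos _
    have hs0 : (0:ℝ) ≤ |Real.sin c| := abs_nonneg _
    have hc0 : (0:ℝ) ≤ |Real.cos c| := abs_nonneg _
    have t1 : Real.exp (-(c*x)) * (x * |Real.sin c| + |Real.cos c|) / (1+x^2)
        ≤ Real.exp (-(c*x)) * (x * |Real.sin c| + |Real.cos c|) := by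
      apply div_le_self (by positivity) hD
    calc ‖G x c‖ = |G x c| := rfl
      _ ≤ _ := h1
      _ ≤ _ := t1
      _ = |Real.cos c| * Real.exp (-(c*x)) + |Real.sin c| * (x * Real.exp (-(c*x))) := by ring
  have hint : Integrable (fun x : ℝ => |Real.cos c| * Real.exp (-(c*x)) + |Real.sin c| * (x * Real.exp (-(c*x))))
      (volume.restrict (Ioi 0)) := by exact hint1.add hint2
  have h := MeasureTheory.norm_integral_le_of_norm_le hint hb
  rw [MeasureTheory.integral_add hint1 hint2, MeasureTheory.integral_const_mul,
    MeasureTheory.integral_const_mul, integral_exp_neg_mul hc, integral_mul_exp_neg_mul hc] at h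
  exact h


lemma K_seg {c d : ℝ} (hc : 0 < c) (hcd : c ≤ d) :
    ∫ u in c..d, Real.sin u / u = K c - K d := by
  have hd : 0 < d := lt_of_lt_of_le hc hcd
  set f : ℝ → ℝ → ℝ := fun u x => Real.exp (-(x*u)) * Real.sin u with hf
  have hpt : EqOn (fun u => Real.sin u / u) (fun u => ∫ x in Ioi (0:ℝ), f u x) (Ioc c d) := by
    intro u hu
    have hu0 : 0 < u := lt_trans hc hu.1
    have h1 : ∫ x in Ioi (0:ℝ), f u x = (∫ x in Ioi (0:ℝ), Real.exp (-(u*x))) * Real.sin u := by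
      rw [← MeasureTheory.integral_mul_const]
      apply MeasureTheory.setIntegral_congr_fun measurableSet_Ioi
      intro x _
      simp only [hf, mul_comm x u]
    simp only []
    rw [h1, integral_exp_neg_mul hu0]
    field_simp
  have hmeas : AEStronglyMeasurable (Function.uncurry f)
      ((volume.restrict (Ioc c d)).prod (volume.restrict (Ioi 0))) := by
    apply Continuous.aestronglyMeasurable
    simp only [hf, Function.uncurry]
    fun_prop
  have hprod : Integrable (Function.uncurry f)
      ((volume.restrict (Ioc c d)).prod (volume.restrict (Ioi 0))) := by
    rw [MeasureTheory.integrable_prod_iff hmeas]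
    constructor
    · filter_upwards [ae_restrict_mem measurableSet_Ioc] with u hu
      have hu0 : 0 < u := lt_trans hc hu.1
      have h2 : IntegrableOn (fun x => Real.exp (-(u*x)) * Real.sin u) (Ioi (0:ℝ)) :=
        (integrableOn_exp_neg_mul hu0).mul_const _
      apply h2.congr_fun ?_ measurableSet_Ioi
      intro x _
      simp [Function.uncurry, hf, mul_comm x u]
    · have hm2 : AEStronglyMeasurable (fun u => ∫ x, ‖f u x‖ ∂(volume.restrict (Ioi (0:ℝ))))
          (volume.restrict (Ioc c d)) := by
        exact (hmeas.norm).integral_prod_right'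
      apply MeasureTheory.Integrable.mono'
        (MeasureTheory.integrableOn_const (C := 1/c) measure_Ioc_lt_top.ne) hm2
      filter_upwards [ae_restrict_mem measurableSet_Ioc] with u hu
      have hu0 : 0 < u := lt_trans hc hu.1
      have hval : ∫ x, ‖f u x‖ ∂(volume.restrict (Ioi (0:ℝ))) = |Real.sin u| * (1/u) := by
        rw [← integral_exp_neg_mul hu0, ← MeasureTheory.integral_const_mul]
        apply MeasureTheory.integral_congr_ae
        filter_upwards [ae_restrict_mem measurableSet_Ioi] with x _
        simp only [hf]
        rw [Real.norm_eq_abs, abs_mul, Real.abs_exp, mul_comm x u, mul_comm]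
      rw [Real.norm_eq_abs, hval, abs_of_nonneg (by positivity)]
      have h3 : |Real.sin u| ≤ 1 := Real.abs_sin_le_one u
      have h4 : (1:ℝ)/u ≤ 1/c := by
        apply one_div_le_one_div_of_le hc hu.1.le
      calc |Real.sin u| * (1/u) ≤ 1 * (1/c) := by
            apply mul_le_mul h3 h4 (by positivity) one_pos.le
        _ = 1/c := one_mul _
  have hswap := MeasureTheory.integral_integral_swap hprod
  calc ∫ u in c..d, Real.sin u / u
      = ∫ u in Ioc c d, Real.sin u / u := intervalIntegral.integral_of_le hcd
    _ = ∫ u in Ioc c d, ∫ x in Ioi (0:ℝ), f u x := MeasureTheory.setIntegral_congr_fun measurableSet_Ioc hpt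
    _ = ∫ x in Ioi (0:ℝ), ∫ u in Ioc c d, f u x := hswap
    _ = ∫ x in Ioi (0:ℝ), (G x c - G x d) := by
        apply MeasureTheory.setIntegral_congr_fun measurableSet_Ioi
        intro x _
        show (∫ u in Ioc c d, f u x) = G x c - G x d
        rw [← intervalIntegral.integral_of_le hcd]
        exact inner_integral x hcd
    _ = K c - K d :=
        MeasureTheory.integral_sub (integrableOn_G hc) (integrableOn_G hd)

lemma K_tendsto_zero : Tendsto K atTop (𝓝 0) := by
  have hb : Tendsto (fun c : ℝ => 2 * c⁻¹) atTop (𝓝 (2 * 0)) :=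
    tendsto_inv_atTop_zero.const_mul 2
  rw [mul_zero] at hb
  apply squeeze_zero_norm' _ hb
  filter_upwards [eventually_ge_atTop (1:ℝ)] with c hc
  have hc0 : (0:ℝ) < c := lt_of_lt_of_le one_pos hc
  have h2 : |K c| ≤ |Real.cos c| * (1/c) + |Real.sin c| * (1/c^2) := K_bound2 hc0
  have h3 : (1:ℝ)/c^2 ≤ 1/c := by
    apply one_div_le_one_div_of_le hc0
    nlinarith
  calc ‖K c‖ = |K c| := rfl
    _ ≤ |Real.cos c| * (1/c) + |Real.sin c| * (1/c^2) := h2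
    _ ≤ 1 * (1/c) + 1 * (1/c) := by
        apply add_le_add
        · exact mul_le_mul (Real.abs_cos_le_one c) le_rfl (by positivity) one_pos.le
        · exact mul_le_mul (Real.abs_sin_le_one c) h3 (by positivity) one_pos.le
    _ = 2 * c⁻¹ := by field_simp; ring

lemma tendsto_intervalIntegral_sin_div {c : ℝ} (hc : 0 < c) :
    Tendsto (fun d => ∫ u in c..d, Real.sin u / u) atTop (𝓝 (K c)) := by
  have h1 : (fun d => K c - K d) =ᶠ[atTop] (fun d => ∫ u in c..d, Real.sin u / u) := by
    filter_upwards [eventually_ge_atTop c] with d hd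
    exact (K_seg hc hd).symm
  have h2 : Tendsto (fun d => K c - K d) atTop (𝓝 (K c - 0)) :=
    tendsto_const_nhds.sub K_tendsto_zero
  rw [sub_zero] at h2
  exact h2.congr' h1

lemma K_le_univ {c : ℝ} (hc : 0 < c) : |K c| ≤ π/2 + 1/2 := by
  have h1 := K_bound1 hc
  have h2 : |Real.sin c| * (1/(2*c)) ≤ 1/2 := by
    have hs : |Real.sin c| ≤ c := (Real.abs_sin_le_abs).trans (le_of_eq (abs_of_pos hc))
    calc |Real.sin c| * (1/(2*c)) ≤ c * (1/(2*c)) := by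
          apply mul_le_mul_of_nonneg_right hs (by positivity)
      _ = 1/2 := by field_simp
  have h3 : |Real.cos c| * (π/2) ≤ 1 * (π/2) :=
    mul_le_mul_of_nonneg_right (Real.abs_cos_le_one c) (by positivity)
  calc |K c| ≤ _ := h1
    _ ≤ 1 * (π/2) + 1/2 := add_le_add h3 h2
    _ = π/2 + 1/2 := by ring

lemma K_le_of_ge {c : ℝ} (hc : 5/2 ≤ c) : |K c| ≤ 14/25 := by
  have hc0 : (0:ℝ) < c := lt_of_lt_of_le (by norm_num) hc
  have h1 := K_bound2 hc0
  have ha : (1:ℝ)/c ≤ 2/5 := by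
    rw [div_le_div_iff₀ hc0 (by norm_num)]
    linarith
  have hb : (1:ℝ)/c^2 ≤ 4/25 := by
    rw [div_le_div_iff₀ (by positivity) (by norm_num)]
    nlinarith
  calc |K c| ≤ |Real.cos c| * (1/c) + |Real.sin c| * (1/c^2) := h1
    _ ≤ 1 * (2/5) + 1 * (4/25) := by
        apply add_le_add
        · exact mul_le_mul (Real.abs_cos_le_one c) ha (by positivity) one_pos.le
        · exact mul_le_mul (Real.abs_sin_le_one c) hb (by positivity) one_pos.le
    _ = 14/25 := by norm_num

lemma K_pi_div_two : |K (π/2)| ≤ 1/π := by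
  have h1 := K_bound1 (show (0:ℝ) < π/2 by positivity)
  rw [Real.cos_pi_div_two, Real.sin_pi_div_two] at h1
  simp only [abs_zero, abs_one, zero_mul, one_mul, zero_add] at h1
  rwa [show (2:ℝ)*(π/2) = π by ring] at h1


lemma arctan_le_self {x : ℝ} (hx : 0 ≤ x) : Real.arctan x ≤ x := by
  rcases eq_or_lt_of_le hx with h|h
  · simp [← h]
  · have h1 : 0 < Real.arctan x := by
      rw [← Real.arctan_zero]
      exact Real.arctan_strictMono h
    have h2 : Real.arctan x < π/2 := Real.arctan_lt_pi_div_two x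
    have h3 := Real.lt_tan h1 h2
    rw [Real.tan_arctan] at h3
    exact h3.le

lemma abs_sin_sub_sin_le (A B : ℝ) : |Real.sin A - Real.sin B| ≤ |A - B| := by
  rw [Real.sin_sub_sin]
  calc |2 * Real.sin ((A-B)/2) * Real.cos ((A+B)/2)|
      = 2 * |Real.sin ((A-B)/2)| * |Real.cos ((A+B)/2)| := by
        rw [abs_mul, abs_mul]; norm_num
    _ ≤ 2 * |(A-B)/2| * 1 := by
        apply mul_le_mul (mul_le_mul_of_nonneg_left Real.abs_sin_le_abs (by norm_num))
          (Real.abs_cos_le_one _) (abs_nonneg _) (by positivity)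
    _ = |A - B| := by
        rw [mul_one, abs_div, abs_two]
        ring

lemma abs_integral_le_log {f : ℝ → ℝ} {x y : ℝ} (hx : 0 < x) (hxy : x ≤ y)
    (hf : IntervalIntegrable f volume x y)
    (hb : ∀ s ∈ Icc x y, |f s| ≤ 1/s) :
    |∫ s in x..y, f s| ≤ Real.log (y/x) := by
  have h1int : IntervalIntegrable (fun s : ℝ => 1/s) volume x y := by
    apply ContinuousOn.intervalIntegrable
    apply ContinuousOn.div continuousOn_const continuousOn_id
    intro s hs
    rw [uIcc_of_le hxy] at hs
    exact ne_of_gt (lt_of_lt_of_le hx hs.1)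
  have h2 : |∫ s in x..y, f s| ≤ ∫ s in x..y, |f s| :=
    intervalIntegral.abs_integral_le_integral_abs hxy
  have h3 : (∫ s in x..y, |f s|) ≤ ∫ s in x..y, 1/s :=
    intervalIntegral.integral_mono_on hxy hf.abs h1int hb
  rw [← integral_one_div_of_pos hx (lt_of_lt_of_le hx hxy)]
  linarith

lemma log_le_div_e {x : ℝ} (hx : 0 < x) : Real.log x ≤ x / Real.exp 1 := by
  have h := Real.log_le_sub_one_of_pos (show 0 < x / Real.exp 1 by positivity)
  rw [Real.log_div (ne_of_gt hx) (ne_of_gt (Real.exp_pos 1)), Real.log_exp] at h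
  linarith


lemma numA : 5/2 + Real.log (7/2) + π/2 ≤ 1.73*π + Real.log 4 - Real.log π := by
  have hπu : π ≤ 3.141593 := by linarith [Real.pi_lt_d6]
  have hπl : (3.141592:ℝ) ≤ π := Real.pi_gt_d6.le
  have h1 : Real.log (7*π/8) = Real.log (7/2) + Real.log π - Real.log 4 := by
    rw [show (7:ℝ)*π/8 = (7/2)*π/4 by ring,
      Real.log_div (by positivity) (by norm_num),
      Real.log_mul (by norm_num) (ne_of_gt Real.pi_pos)]
  have h2 : Real.log (7*π/8) ≤ (7*π/8) / Real.exp 1 := log_le_div_e (by positivity)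
  have h3 : (7*π/8) / Real.exp 1 ≤ 2.7489/2.7182818 := by
    apply div_le_div₀ (by norm_num) (by linarith) (by norm_num)
    linarith [Real.exp_one_gt_d9]
  have h4 : (2.7489:ℝ)/2.7182818 ≤ 1.01127 := by norm_num
  linarith

lemma numB : 3 + Real.log (π/2 * (7/5)) + 1/π + 28/25 ≤ 1.73*π + Real.log 4 - Real.log π := by
  have hπu : π ≤ 3.141593 := by linarith [Real.pi_lt_d6]
  have hπl : (3.141592:ℝ) ≤ π := Real.pi_gt_d6.le
  have hπsq : π^2 ≤ 9.86961 := by nlinarith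
  have h1 : Real.log (7*π^2/40) = Real.log (π/2 * (7/5)) + Real.log π - Real.log 4 := by
    rw [show (7:ℝ)*π^2/40 = ((π/2 * (7/5)) * π)/4 by ring,
      Real.log_div (by positivity) (by norm_num),
      Real.log_mul (by positivity) (ne_of_gt Real.pi_pos)]
  have h2 : Real.log (7*π^2/40) ≤ (7*π^2/40) / Real.exp 1 := log_le_div_e (by positivity)
  have h3 : (7*π^2/40) / Real.exp 1 ≤ 1.72719/2.7182818 := by
    apply div_le_div₀ (by norm_num) (by linarith) (by norm_num)
    linarith [Real.exp_one_gt_d9]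
  have h4 : (1.72719:ℝ)/2.7182818 ≤ 0.63541 := by norm_num
  have h5 : 1/π ≤ 0.31832 := by
    rw [div_le_iff₀ Real.pi_pos]
    nlinarith
  linarith
end ILT

open Real ILT intervalIntegral in
set_option maxHeartbeats 3000000 in
/-- bound for the inverse Laplace transform of `p(s)/(s p(-s))`. -/
theorem inverse_laplace_transform_bound
    (a b : ℝ) (ha : 0 < a) (hab : a ≤ b) (ℓ : ℕ) (hℓ : 1 ≤ ℓ)
    (γ : Fin ℓ → ℝ) (hγ : ∀ j, γ j ∈ Set.Icc a b)
    (κ : ℝ) (hκ : κ = b / a)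
    (θ : ℝ → ℝ) (hθ : ∀ s, θ s = -2 * ∑ j, Real.arctan (s / γ j)) :
    ∀ t : ℝ, 0 < t → ∃ I : ℝ,
      Tendsto (fun T : ℝ => ∫ s in (0:ℝ)..T, Real.sin (s * t + θ s) / s) atTop (𝓝 I) ∧
      |1 / 2 + ((-1 : ℝ) ^ ℓ / Real.pi) * I| ≤ gammaLK ℓ κ := by
  intro t ht
  have hγpos : ∀ j, 0 < γ j := fun j => lt_of_lt_of_le ha (hγ j).1
  have hbpos : 0 < b := lt_of_lt_of_le ha hab
  have hκpos : 0 < κ := by rw [hκ]; positivity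
  have hκ1 : (1:ℝ) ≤ κ := by rw [hκ, le_div_iff₀ ha]; linarith
  have hne : Nonempty (Fin ℓ) := ⟨⟨0, hℓ⟩⟩
  have hℓ1 : (1:ℝ) ≤ (ℓ:ℝ) := by exact_mod_cast hℓ
  set m : ℝ := 2 * ∑ j, (γ j)⁻¹ with hm_def
  set E : ℝ := 2 * ∑ j, γ j with hE_def
  have hsum1 : 0 < ∑ j, (γ j)⁻¹ :=
    Finset.sum_pos (fun j _ => inv_pos.2 (hγpos j)) Finset.univ_nonempty
  have hsum2 : 0 < ∑ j, γ j := Finset.sum_pos (fun j _ => hγpos j) Finset.univ_nonempty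
  have hmpos : 0 < m := by rw [hm_def]; positivity
  have hEpos : 0 < E := by rw [hE_def]; positivity
  have hmE : m * E ≤ 4 * (ℓ:ℝ)^2 * κ := by
    have h1 : ∑ j, (γ j)⁻¹ ≤ (ℓ:ℝ) * a⁻¹ := by
      calc ∑ j, (γ j)⁻¹ ≤ ∑ _j : Fin ℓ, a⁻¹ :=
            Finset.sum_le_sum (fun j _ => by
              apply inv_anti₀ ha (hγ j).1)
        _ = (ℓ:ℝ) * a⁻¹ := by
            rw [Finset.sum_const, Finset.card_univ, Fintype.card_fin, nsmul_eq_mul]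
    have h2 : ∑ j, γ j ≤ (ℓ:ℝ) * b := by
      calc ∑ j, γ j ≤ ∑ _j : Fin ℓ, b := Finset.sum_le_sum (fun j _ => (hγ j).2)
        _ = (ℓ:ℝ) * b := by
            rw [Finset.sum_const, Finset.card_univ, Fintype.card_fin, nsmul_eq_mul]
    have h3 : m * E ≤ (2 * ((ℓ:ℝ) * a⁻¹)) * (2 * ((ℓ:ℝ) * b)) := by
      apply mul_le_mul (by rw [hm_def]; linarith) (by rw [hE_def]; linarith) hEpos.le
      positivity
    calc m * E ≤ _ := h3
      _ = 4 * (ℓ:ℝ)^2 * (b/a) := by field_simp; ring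
      _ = 4 * (ℓ:ℝ)^2 * κ := by rw [hκ]
  set η : ℝ → ℝ := fun s => 2 * ∑ j, Real.arctan (γ j / s) with hη_def
  -- pointwise facts
  have hθabs : ∀ s : ℝ, 0 ≤ s → |θ s| ≤ m * s := by
    intro s hs
    rw [hθ s]
    have h1 : ∀ j : Fin ℓ, 0 ≤ Real.arctan (s / γ j) := by
      intro j
      rw [← Real.arctan_zero]
      apply Real.arctan_strictMono.monotone (div_nonneg hs (hγpos j).le)
    have h2 : ∑ j, Real.arctan (s / γ j) ≤ ∑ j, (γ j)⁻¹ * s := by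
      apply Finset.sum_le_sum
      intro j _
      calc Real.arctan (s / γ j) ≤ s / γ j := arctan_le_self (div_nonneg hs (hγpos j).le)
        _ = (γ j)⁻¹ * s := by rw [div_eq_mul_inv]; ring
    have h3 : 0 ≤ ∑ j, Real.arctan (s / γ j) := Finset.sum_nonneg (fun j _ => h1 j)
    rw [abs_mul, abs_of_nonneg h3]
    calc |(-2:ℝ)| * ∑ j, Real.arctan (s / γ j) = 2 * ∑ j, Real.arctan (s / γ j) := by
          norm_num
      _ ≤ 2 * ∑ j, (γ j)⁻¹ * s := by linarith
      _ = m * s := by rw [hm_def, ← Finset.sum_mul]; ring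
  have hηnn : ∀ s : ℝ, 0 < s → 0 ≤ η s := by
    intro s hs
    show 0 ≤ 2 * ∑ j, Real.arctan (γ j / s)
    have h1 : ∀ j : Fin ℓ, 0 ≤ Real.arctan (γ j / s) := by
      intro j
      rw [← Real.arctan_zero]
      apply Real.arctan_strictMono.monotone (div_nonneg (hγpos j).le hs.le)
    have h2 := Finset.sum_nonneg (fun j (_ : j ∈ Finset.univ) => h1 j)
    linarith
  have hηle : ∀ s : ℝ, 0 < s → η s ≤ E / s := by
    intro s hs
    show 2 * ∑ j, Real.arctan (γ j / s) ≤ (2 * ∑ j, γ j) / s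
    have h2 : ∑ j, Real.arctan (γ j / s) ≤ ∑ j, γ j / s := by
      apply Finset.sum_le_sum
      intro j _
      exact arctan_le_self (div_nonneg (hγpos j).le hs.le)
    calc 2 * ∑ j, Real.arctan (γ j / s) ≤ 2 * ∑ j, γ j / s := by linarith
      _ = (2 * ∑ j, γ j) / s := by rw [← Finset.sum_div]; ring
  have hθη : ∀ s : ℝ, 0 < s → θ s = η s - ℓ * π := by
    intro s hs
    rw [hθ s]
    have h1 : ∀ j : Fin ℓ, Real.arctan (γ j / s) = π/2 - Real.arctan (s / γ j) := by
      intro j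
      have h2 := Real.arctan_inv_of_pos (div_pos hs (hγpos j))
      rw [inv_div] at h2
      exact h2
    have h3 : ∑ j, Real.arctan (γ j / s) = (ℓ:ℝ) * (π/2) - ∑ j, Real.arctan (s / γ j) := by
      rw [Finset.sum_congr rfl (fun j _ => h1 j), Finset.sum_sub_distrib,
        Finset.sum_const, Finset.card_univ, Fintype.card_fin, nsmul_eq_mul]
    rw [show η s = 2 * ∑ j, Real.arctan (γ j / s) from rfl, h3]
    ring
  set g : ℝ → ℝ := fun s => Real.sin (s * t + θ s) / s with hg_def
  set p : ℝ → ℝ := fun s => Real.sin (t * s) / s with hp_def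
  set q : ℝ → ℝ := fun s => (Real.sin (t * s + η s) - Real.sin (t * s)) / s with hq_def
  have hflip : ∀ s : ℝ, 0 < s → g s = (-1:ℝ)^ℓ * (p s + q s) := by
    intro s hs
    have h1 : s * t + θ s = (t * s + η s) - (ℓ:ℤ) * π := by
      rw [hθη s hs]; push_cast; ring
    have h2 : Real.sin (s * t + θ s) = (-1:ℝ)^ℓ * Real.sin (t * s + η s) := by
      rw [h1, Real.sin_sub_int_mul_pi]
      norm_num
    show Real.sin (s * t + θ s) / s = _
    rw [h2, hp_def, hq_def]
    field_simp
    ring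
  -- continuity facts
  have hθcont : Continuous θ := by
    have h0 : θ = fun s => -2 * ∑ j, Real.arctan (s / γ j) := funext hθ
    rw [h0]
    apply Continuous.mul continuous_const
    apply continuous_finset_sum
    intro j _
    exact Real.continuous_arctan.comp (continuous_id.div_const _)
  have hsincont : Continuous (fun s => Real.sin (s * t + θ s)) := by fun_prop
  have hηcontOn : ∀ {u v : ℝ}, 0 < u → u ≤ v → ContinuousOn η (uIcc u v) := by
    intro u v hu huv
    have hne0 : ∀ s ∈ uIcc u v, s ≠ 0 := by
      intro s hs
      rw [uIcc_of_le huv] at hs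
      exact ne_of_gt (lt_of_lt_of_le hu hs.1)
    rw [hη_def]
    apply ContinuousOn.mul continuousOn_const
    apply continuousOn_finset_sum
    intro j _
    exact Real.continuous_arctan.comp_continuousOn
      (continuousOn_const.div continuousOn_id hne0)
  have hgc : ∀ {u v : ℝ}, 0 < u → u ≤ v → IntervalIntegrable g volume u v := by
    intro u v hu huv
    apply ContinuousOn.intervalIntegrable
    apply ContinuousOn.div hsincont.continuousOn continuousOn_id
    intro s hs
    rw [uIcc_of_le huv] at hs
    exact ne_of_gt (lt_of_lt_of_le hu hs.1)
  have hpc : ∀ {u v : ℝ}, 0 < u → u ≤ v → IntervalIntegrable p volume u v := by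
    intro u v hu huv
    apply ContinuousOn.intervalIntegrable
    apply ContinuousOn.div (Continuous.continuousOn (by fun_prop)) continuousOn_id
    intro s hs
    rw [uIcc_of_le huv] at hs
    exact ne_of_gt (lt_of_lt_of_le hu hs.1)
  have hqc : ∀ {u v : ℝ}, 0 < u → u ≤ v → IntervalIntegrable q volume u v := by
    intro u v hu huv
    have hne0 : ∀ s ∈ uIcc u v, s ≠ 0 := by
      intro s hs
      rw [uIcc_of_le huv] at hs
      exact ne_of_gt (lt_of_lt_of_le hu hs.1)
    apply ContinuousOn.intervalIntegrable
    apply ContinuousOn.div ?_ continuousOn_id hne0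
    apply ContinuousOn.sub ?_ (Continuous.continuousOn (by fun_prop))
    apply Real.continuous_sin.comp_continuousOn
    exact ContinuousOn.add (Continuous.continuousOn (by fun_prop)) (hηcontOn hu huv)
  -- basic bound for g near zero
  have hgbound : ∀ s : ℝ, 0 < s → |g s| ≤ t + m := by
    intro s hs
    show |Real.sin (s * t + θ s) / s| ≤ t + m
    rw [abs_div, abs_of_pos hs, div_le_iff₀ hs]
    calc |Real.sin (s*t + θ s)| ≤ |s*t + θ s| := Real.abs_sin_le_abs
      _ ≤ |s*t| + |θ s| := abs_add_le _ _
      _ ≤ s*t + m*s := add_le_add (le_of_eq (abs_of_nonneg (by positivity))) (hθabs s hs.le)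
      _ = (t+m)*s := by ring
  have hgs_le_inv : ∀ s : ℝ, 0 < s → |g s| ≤ 1/s := by
    intro s hs
    show |Real.sin (s * t + θ s) / s| ≤ 1/s
    rw [abs_div, abs_of_pos hs]
    gcongr
    exact Real.abs_sin_le_one _
  have hg0 : ∀ w : ℝ, 0 < w → IntervalIntegrable g volume 0 w := by
    intro w hw
    rw [intervalIntegrable_iff_integrableOn_Ioc_of_le hw.le]
    apply Measure.integrableOn_of_bounded (M := t + m) measure_Ioc_lt_top.ne
    · exact ((hsincont.measurable.div measurable_id).aestronglyMeasurable)
    · filter_upwards [ae_restrict_mem measurableSet_Ioc] with s hs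
      rw [Real.norm_eq_abs]
      exact hgbound s hs.1
  -- head piece
  set δ₁ : ℝ := (t + m)⁻¹ with hδ₁_def
  have hδ₁pos : 0 < δ₁ := by rw [hδ₁_def]; positivity
  have hhead : |∫ s in (0:ℝ)..δ₁, g s| ≤ 1 := by
    have h := intervalIntegral.norm_integral_le_of_norm_le_const (C := t + m)
      (f := g) (a := 0) (b := δ₁) ?_
    · calc |∫ s in (0:ℝ)..δ₁, g s| = ‖∫ s in (0:ℝ)..δ₁, g s‖ := (Real.norm_eq_abs _).symm
        _ ≤ (t+m) * |δ₁ - 0| := h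
        _ = 1 := by
            rw [sub_zero, abs_of_pos hδ₁pos, hδ₁_def]
            field_simp
    · intro s hs
      rw [Set.uIoc_of_le hδ₁pos.le] at hs
      rw [Real.norm_eq_abs]
      exact hgbound s hs.1
  -- scale identity for p
  have hpK : ∀ {u v : ℝ}, 0 < u → u ≤ v → (∫ s in u..v, p s) = K (t*u) - K (t*v) := by
    intro u v hu huv
    have hcomp := intervalIntegral.integral_comp_mul_left
      (f := fun w => Real.sin w / w) (a := u) (b := v) (c := t) (ne_of_gt ht)
    have h2 : ∀ s : ℝ, p s = t * ((fun w => Real.sin w / w) (t*s)) := by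
      intro s
      rcases eq_or_ne s 0 with rfl|hs
      · show Real.sin (t*0)/(0:ℝ) = t * (Real.sin (t*0)/(t*0))
        simp
      · show Real.sin (t*s)/s = t * (Real.sin (t*s)/(t*s))
        rw [mul_div_assoc']
        rw [mul_div_mul_left _ _ (ne_of_gt ht)]
    calc (∫ s in u..v, p s) = ∫ s in u..v, t * ((fun w => Real.sin w / w) (t*s)) :=
          intervalIntegral.integral_congr (fun s _ => h2 s)
      _ = t * ∫ s in u..v, (fun w => Real.sin w / w) (t*s) :=
          intervalIntegral.integral_const_mul _ _
      _ = t * (t⁻¹ • ∫ w in t*u..t*v, Real.sin w / w) := by rw [hcomp]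
      _ = ∫ w in t*u..t*v, Real.sin w / w := by
          rw [smul_eq_mul, ← mul_assoc, mul_inv_cancel₀ (ne_of_gt ht), one_mul]
      _ = K (t*u) - K (t*v) := K_seg (by positivity) (by nlinarith)
  -- split points
  set Q : ℝ := m⁻¹ with hQ_def
  set R : ℝ := max Q E with hR_def
  have hQpos : 0 < Q := by rw [hQ_def]; positivity
  have hQR : Q ≤ R := le_max_left _ _
  have hER : E ≤ R := le_max_right _ _
  have hRpos : 0 < R := lt_of_lt_of_le hQpos hQR
  -- tail : q is integrable on Ioi R with integral bounded by E/R ≤ 1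
  have hqabs : ∀ s : ℝ, 0 < s → |q s| ≤ E / s^2 := by
    intro s hs
    show |(Real.sin (t * s + η s) - Real.sin (t * s)) / s| ≤ E / s^2
    rw [abs_div, abs_of_pos hs]
    have h1 : |Real.sin (t*s + η s) - Real.sin (t*s)| ≤ E/s := by
      calc |Real.sin (t*s + η s) - Real.sin (t*s)| ≤ |(t*s + η s) - (t*s)| :=
            ILT.abs_sin_sub_sin_le _ _
        _ = |η s| := by congr 1; ring
        _ = η s := abs_of_nonneg (hηnn s hs)
        _ ≤ E/s := hηle s hs
    calc |Real.sin (t*s + η s) - Real.sin (t*s)| / s ≤ (E/s) / s :=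
          (div_le_div_iff_of_pos_right hs).mpr h1
      _ = E / s^2 := by rw [div_div, ← sq]
  have hdom : IntegrableOn (fun s : ℝ => E / s^2) (Ioi R) := by
    have h0 : IntegrableOn (fun x : ℝ => E * x^(-2:ℝ)) (Ioi R) :=
      (integrableOn_Ioi_rpow_of_lt (show (-2:ℝ) < -1 by norm_num) hRpos).const_mul E
    apply h0.congr_fun ?_ measurableSet_Ioi
    intro s hs
    have hs0 : (0:ℝ) < s := lt_trans hRpos hs
    show E * s ^ (-2:ℝ) = E / s^2
    rw [Real.rpow_neg hs0.le, show ((2:ℝ) = ((2:ℕ):ℝ)) by norm_num, Real.rpow_natCast,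
      div_eq_mul_inv]
  have hdomval : ∫ s in Ioi R, E / s^2 = E / R := by
    calc ∫ s in Ioi R, E / s^2 = ∫ s in Ioi R, E * s^(-2:ℝ) := by
          apply MeasureTheory.setIntegral_congr_fun measurableSet_Ioi
          intro s hs
          have hs0 : (0:ℝ) < s := lt_trans hRpos hs
          show E / s^2 = E * s ^ (-2:ℝ)
          rw [Real.rpow_neg hs0.le, show ((2:ℝ) = ((2:ℕ):ℝ)) by norm_num, Real.rpow_natCast,
            div_eq_mul_inv]
      _ = E * ∫ s in Ioi R, s^(-2:ℝ) := MeasureTheory.integral_const_mul _ _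
      _ = E * R⁻¹ := by
          rw [integral_Ioi_rpow_of_lt (by norm_num) hRpos,
            show (-2+1 : ℝ) = -1 by norm_num, Real.rpow_neg_one]
          norm_num
      _ = E / R := (div_eq_mul_inv E R).symm
  have hqIntOn : IntegrableOn q (Ioi R) := by
    apply Integrable.mono' hdom
    · have : ContinuousOn q (Ioi R) := by
        have hne0 : ∀ s ∈ Ioi R, s ≠ 0 := fun s hs => ne_of_gt (lt_trans hRpos hs)
        apply ContinuousOn.div ?_ continuousOn_id hne0
        apply ContinuousOn.sub ?_ (Continuous.continuousOn (by fun_prop))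
        apply Real.continuous_sin.comp_continuousOn
        apply ContinuousOn.add (Continuous.continuousOn (by fun_prop))
        rw [hη_def]
        apply ContinuousOn.mul continuousOn_const
        apply continuousOn_finset_sum
        intro j _
        exact Real.continuous_arctan.comp_continuousOn
          (continuousOn_const.div continuousOn_id hne0)
      exact this.aestronglyMeasurable measurableSet_Ioi
    · filter_upwards [ae_restrict_mem measurableSet_Ioi] with s hs
      rw [Real.norm_eq_abs]
      exact hqabs s (lt_trans hRpos hs)
  set L₂ : ℝ := ∫ s in Ioi R, q s with hL₂_def
  have hL₂ : |L₂| ≤ 1 := by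
    have h1 : |L₂| ≤ ∫ s in Ioi R, E / s^2 := by
      rw [hL₂_def]
      calc |∫ s in Ioi R, q s| = ‖∫ s in Ioi R, q s‖ := (Real.norm_eq_abs _).symm
        _ ≤ _ := MeasureTheory.norm_integral_le_of_norm_le hdom ?_
      filter_upwards [ae_restrict_mem measurableSet_Ioi] with s hs
      rw [Real.norm_eq_abs]
      exact hqabs s (lt_trans hRpos hs)
    rw [hdomval] at h1
    have h2 : E / R ≤ 1 := by
      rw [div_le_one hRpos]
      exact hER
    linarith
  -- the tail-splitting identity
  have hsplit : ∀ T : ℝ, R ≤ T →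
      (∫ s in R..T, g s) = (-1:ℝ)^ℓ * ((K (t*R) - K (t*T)) + ∫ s in R..T, q s) := by
    intro T hT
    have h1 : ∀ s ∈ Set.uIcc R T, g s = (-1:ℝ)^ℓ * (p s + q s) := by
      intro s hs
      rw [uIcc_of_le hT] at hs
      exact hflip s (lt_of_lt_of_le hRpos hs.1)
    calc (∫ s in R..T, g s) = ∫ s in R..T, (-1:ℝ)^ℓ * (p s + q s) :=
          intervalIntegral.integral_congr h1
      _ = (-1:ℝ)^ℓ * ∫ s in R..T, (p s + q s) := intervalIntegral.integral_const_mul _ _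
      _ = (-1:ℝ)^ℓ * ((∫ s in R..T, p s) + ∫ s in R..T, q s) := by
          rw [intervalIntegral.integral_add (hpc hRpos hT) (hqc hRpos hT)]
      _ = (-1:ℝ)^ℓ * ((K (t*R) - K (t*T)) + ∫ s in R..T, q s) := by
          rw [hpK hRpos hT]
  -- the candidate limit
  refine ⟨(∫ s in (0:ℝ)..R, g s) + (-1:ℝ)^ℓ * (K (t*R) + L₂), ?_, ?_⟩
  · -- Tendsto
    have heq : (fun T => (∫ s in (0:ℝ)..R, g s)
          + (-1:ℝ)^ℓ * ((K (t*R) - K (t*T)) + ∫ s in R..T, q s))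
        =ᶠ[atTop] (fun T : ℝ => ∫ s in (0:ℝ)..T, Real.sin (s * t + θ s) / s) := by
      filter_upwards [eventually_ge_atTop R] with T hT
      have hadd := intervalIntegral.integral_add_adjacent_intervals
        (hg0 R hRpos) (hgc hRpos hT)
      rw [← hsplit T hT, hadd]
    apply Tendsto.congr' heq
    have hKlim : Tendsto (fun T : ℝ => K (t*T)) atTop (𝓝 0) :=
      K_tendsto_zero.comp (tendsto_id.const_mul_atTop ht)
    have hqlim : Tendsto (fun T : ℝ => ∫ s in R..T, q s) atTop (𝓝 L₂) :=
      MeasureTheory.intervalIntegral_tendsto_integral_Ioi R hqIntOn tendsto_id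
    have h2 : Tendsto (fun T : ℝ => (K (t*R) - K (t*T)) + ∫ s in R..T, q s)
        atTop (𝓝 ((K (t*R) - 0) + L₂)) :=
      (tendsto_const_nhds.sub hKlim).add hqlim
    rw [sub_zero] at h2
    exact tendsto_const_nhds.add (h2.const_mul _)
  · -- the bound
    have hπ0 : (0:ℝ) < π := Real.pi_pos
    have htR : 0 < t * R := by positivity
    have hlogRQ : Real.log (R / Q) ≤ Real.log (4 * (ℓ:ℝ)^2 * κ) := by
      apply Real.log_le_log (by positivity)
      rw [div_le_iff₀ hQpos]
      apply max_le
      · have h1 : (1:ℝ) ≤ 4*(ℓ:ℝ)^2*κ := by nlinarith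
        nlinarith [mul_le_mul_of_nonneg_right h1 hQpos.le]
      · rw [hQ_def, ← div_eq_mul_inv, le_div_iff₀ hmpos]
        calc E * m = m * E := mul_comm _ _
          _ ≤ _ := hmE
    have hmid2 : |∫ s in Q..R, g s| ≤ Real.log (4 * (ℓ:ℝ)^2 * κ) := by
      have h1 := abs_integral_le_log hQpos hQR (hgc hQpos hQR)
        (fun s hs => hgs_le_inv s (lt_of_lt_of_le hQpos hs.1))
      exact h1.trans hlogRQ
    have habsI : ∀ X : ℝ, |(∫ s in (0:ℝ)..R, g s) + (-1:ℝ)^ℓ * (K (t*R) + L₂)| ≤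
        |∫ s in (0:ℝ)..R, g s| + |K (t*R)| + |L₂| := by
      intro X
      calc |(∫ s in (0:ℝ)..R, g s) + (-1:ℝ)^ℓ * (K (t*R) + L₂)|
          ≤ |∫ s in (0:ℝ)..R, g s| + |(-1:ℝ)^ℓ * (K (t*R) + L₂)| := abs_add_le _ _
        _ = |∫ s in (0:ℝ)..R, g s| + |K (t*R) + L₂| := by
            rw [abs_mul, abs_pow, abs_neg, abs_one, one_pow, one_mul]
        _ ≤ |∫ s in (0:ℝ)..R, g s| + (|K (t*R)| + |L₂|) := by
            have := abs_add_le (K (t*R)) L₂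
            linarith
        _ = _ := by ring
    have hIb : |(∫ s in (0:ℝ)..R, g s) + (-1:ℝ)^ℓ * (K (t*R) + L₂)| ≤
        (1.73*π + Real.log 4 - Real.log π) + Real.log (4*(ℓ:ℝ)^2*κ) := by
      rcases le_or_gt t (5/2 * m) with hbranch | hbranch
      · -- branch A : t ≤ (5/2) m
        have hδQ : δ₁ ≤ Q := by
          rw [hδ₁_def, hQ_def]
          apply inv_anti₀ hmpos (by linarith)
        have hmid1 : |∫ s in δ₁..Q, g s| ≤ Real.log (7/2) := by
          have h1 := abs_integral_le_log hδ₁pos hδQ (hgc hδ₁pos hδQ)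
            (fun s hs => hgs_le_inv s (lt_of_lt_of_le hδ₁pos hs.1))
          apply h1.trans
          apply Real.log_le_log (by positivity)
          have h2 : Q / δ₁ = (t+m)/m := by
            rw [hQ_def, hδ₁_def]
            field_simp
          rw [h2, div_le_iff₀ hmpos]
          linarith
        have hA : |∫ s in (0:ℝ)..R, g s|
            ≤ 1 + Real.log (7/2) + Real.log (4*(ℓ:ℝ)^2*κ) := by
          have e1 : (∫ s in (0:ℝ)..δ₁, g s) + (∫ s in δ₁..Q, g s) = ∫ s in (0:ℝ)..Q, g s :=
            intervalIntegral.integral_add_adjacent_intervals (hg0 δ₁ hδ₁pos) (hgc hδ₁pos hδQ)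
          have e2 : (∫ s in (0:ℝ)..Q, g s) + (∫ s in Q..R, g s) = ∫ s in (0:ℝ)..R, g s :=
            intervalIntegral.integral_add_adjacent_intervals (hg0 Q hQpos) (hgc hQpos hQR)
          rw [← e2, ← e1]
          calc |((∫ s in (0:ℝ)..δ₁, g s) + (∫ s in δ₁..Q, g s)) + (∫ s in Q..R, g s)|
              ≤ |(∫ s in (0:ℝ)..δ₁, g s) + (∫ s in δ₁..Q, g s)| + |∫ s in Q..R, g s| := abs_add_le _ _
            _ ≤ (|∫ s in (0:ℝ)..δ₁, g s| + |∫ s in δ₁..Q, g s|) + |∫ s in Q..R, g s| := by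
                have := abs_add_le (∫ s in (0:ℝ)..δ₁, g s) (∫ s in δ₁..Q, g s)
                linarith
            _ ≤ 1 + Real.log (7/2) + Real.log (4*(ℓ:ℝ)^2*κ) := by
                linarith [hhead, hmid1, hmid2]
        have hK1 : |K (t*R)| ≤ π/2 + 1/2 := K_le_univ htR
        have hnum := numA
        calc |(∫ s in (0:ℝ)..R, g s) + (-1:ℝ)^ℓ * (K (t*R) + L₂)|
            ≤ |∫ s in (0:ℝ)..R, g s| + |K (t*R)| + |L₂| := habsI 0
          _ ≤ (1 + Real.log (7/2) + Real.log (4*(ℓ:ℝ)^2*κ)) + (π/2 + 1/2) + 1 := by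
              linarith
          _ = (5/2 + Real.log (7/2) + π/2) + Real.log (4*(ℓ:ℝ)^2*κ) := by ring
          _ ≤ (1.73*π + Real.log 4 - Real.log π) + Real.log (4*(ℓ:ℝ)^2*κ) := by
              linarith
      · -- branch B : t > (5/2) m
        set δ' : ℝ := π/(2*t) with hδ'_def
        have hδ'pos : 0 < δ' := by rw [hδ'_def]; positivity
        have hπlt : π < 5 := by nlinarith [Real.pi_lt_d2]
        have hπ2 : (2:ℝ) ≤ π := Real.two_le_pi
        have hδ₁δ' : δ₁ ≤ δ' := by
          rw [hδ₁_def, hδ'_def, le_div_iff₀ (by positivity : (0:ℝ) < 2*t),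
            inv_mul_le_iff₀ (by positivity : (0:ℝ) < t + m)]
          nlinarith
        have hδ'Q : δ' ≤ Q := by
          rw [hδ'_def, hQ_def, div_le_iff₀ (by positivity : (0:ℝ) < 2*t)]
          have h1 : (5:ℝ) * m ≤ 2 * t := by linarith
          calc π ≤ 5 := hπlt.le
            _ = m⁻¹ * (5 * m) := by field_simp
            _ ≤ m⁻¹ * (2*t) := by
                apply mul_le_mul_of_nonneg_left h1 (by positivity)
        have hτQ : 5/2 ≤ t * Q := by
          rw [hQ_def]
          calc (5:ℝ)/2 = (5/2) * m * m⁻¹ := by field_simp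
            _ ≤ t * m⁻¹ := by
                apply mul_le_mul_of_nonneg_right ?_ (by positivity)
                linarith
        have htR5 : 5/2 ≤ t * R := by
          calc (5:ℝ)/2 ≤ t * Q := hτQ
            _ ≤ t * R := mul_le_mul_of_nonneg_left hQR ht.le
        have hmidB1 : |∫ s in δ₁..δ', g s| ≤ Real.log (π/2 * (7/5)) := by
          have h1 := abs_integral_le_log hδ₁pos hδ₁δ' (hgc hδ₁pos hδ₁δ')
            (fun s hs => hgs_le_inv s (lt_of_lt_of_le hδ₁pos hs.1))
          apply h1.trans
          apply Real.log_le_log (by positivity)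
          rw [hδ'_def, hδ₁_def]
          have h3 : π/(2*t)/(t+m)⁻¹ = π/2 * ((t+m)/t) := by field_simp
          rw [h3]
          apply mul_le_mul_of_nonneg_left ?_ (by positivity)
          rw [div_le_iff₀ ht]
          linarith
        have hdiffB : |(∫ s in δ'..Q, g s) - ∫ s in δ'..Q, p s| ≤ 1 := by
          have hgp : ∀ s ∈ Set.uIoc δ' Q, ‖g s - p s‖ ≤ m := by
            intro s hs
            rw [Set.uIoc_of_le hδ'Q] at hs
            have hs0 : 0 < s := lt_trans hδ'pos hs.1
            rw [Real.norm_eq_abs]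
            show |Real.sin (s*t + θ s)/s - Real.sin (t*s)/s| ≤ m
            rw [div_sub_div_same, abs_div, abs_of_pos hs0, div_le_iff₀ hs0]
            calc |Real.sin (s*t + θ s) - Real.sin (t*s)| ≤ |s*t + θ s - t*s| :=
                  ILT.abs_sin_sub_sin_le _ _
              _ = |θ s| := by congr 1; ring
              _ ≤ m * s := hθabs s hs0.le
          have h2 : (∫ s in δ'..Q, g s) - (∫ s in δ'..Q, p s) = ∫ s in δ'..Q, (g s - p s) :=
            (intervalIntegral.integral_sub (hgc hδ'pos hδ'Q) (hpc hδ'pos hδ'Q)).symm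
          rw [h2]
          have h3 := intervalIntegral.norm_integral_le_of_norm_le_const (C := m)
            (f := fun s => g s - p s) (a := δ') (b := Q) hgp
          calc |∫ s in δ'..Q, (g s - p s)| = ‖∫ s in δ'..Q, (g s - p s)‖ :=
                (Real.norm_eq_abs _).symm
            _ ≤ m * |Q - δ'| := h3
            _ ≤ 1 := by
                rw [abs_of_nonneg (by linarith)]
                calc m * (Q - δ') ≤ m * Q :=
                      mul_le_mul_of_nonneg_left (by linarith) hmpos.le
                  _ = 1 := by rw [hQ_def]; field_simp
        have hpQval : (∫ s in δ'..Q, p s) = K (π/2) - K (t*Q) := by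
          have h1 := hpK hδ'pos hδ'Q
          rw [show t * δ' = π/2 by rw [hδ'_def]; field_simp] at h1
          exact h1
        have hmidB2 : |∫ s in δ'..Q, g s| ≤ 1 + (1/π + 14/25) := by
          have h1 : |∫ s in δ'..Q, p s| ≤ 1/π + 14/25 := by
            rw [hpQval]
            calc |K (π/2) - K (t*Q)| ≤ |K (π/2)| + |K (t*Q)| := by
                  rw [sub_eq_add_neg]
                  exact (abs_add_le _ _).trans (by rw [abs_neg])
              _ ≤ 1/π + 14/25 := add_le_add K_pi_div_two (K_le_of_ge hτQ)
          calc |∫ s in δ'..Q, g s|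
              = |((∫ s in δ'..Q, g s) - ∫ s in δ'..Q, p s) + ∫ s in δ'..Q, p s| := by
                congr 1; ring
            _ ≤ |(∫ s in δ'..Q, g s) - ∫ s in δ'..Q, p s| + |∫ s in δ'..Q, p s| := abs_add_le _ _
            _ ≤ 1 + (1/π + 14/25) := add_le_add hdiffB h1
        have hA : |∫ s in (0:ℝ)..R, g s| ≤ (1 + Real.log (π/2 * (7/5)) + (1 + (1/π + 14/25)))
            + Real.log (4*(ℓ:ℝ)^2*κ) := by
          have e1 : (∫ s in (0:ℝ)..δ₁, g s) + (∫ s in δ₁..δ', g s) = ∫ s in (0:ℝ)..δ', g s :=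
            intervalIntegral.integral_add_adjacent_intervals (hg0 δ₁ hδ₁pos) (hgc hδ₁pos hδ₁δ')
          have e2 : (∫ s in (0:ℝ)..δ', g s) + (∫ s in δ'..Q, g s) = ∫ s in (0:ℝ)..Q, g s :=
            intervalIntegral.integral_add_adjacent_intervals (hg0 δ' hδ'pos) (hgc hδ'pos hδ'Q)
          have e3 : (∫ s in (0:ℝ)..Q, g s) + (∫ s in Q..R, g s) = ∫ s in (0:ℝ)..R, g s :=
            intervalIntegral.integral_add_adjacent_intervals (hg0 Q hQpos) (hgc hQpos hQR)
          rw [← e3, ← e2, ← e1]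
          have t1 := abs_add_le ((∫ s in (0:ℝ)..δ₁, g s) + (∫ s in δ₁..δ', g s))
            (∫ s in δ'..Q, g s)
          have t2 := abs_add_le (∫ s in (0:ℝ)..δ₁, g s) (∫ s in δ₁..δ', g s)
          have t3 := abs_add_le (((∫ s in (0:ℝ)..δ₁, g s) + (∫ s in δ₁..δ', g s))
            + (∫ s in δ'..Q, g s)) (∫ s in Q..R, g s)
          linarith [hhead, hmidB1, hmidB2, hmid2]
        have hK1 : |K (t*R)| ≤ 14/25 := K_le_of_ge htR5
        have hnum := numB
        calc |(∫ s in (0:ℝ)..R, g s) + (-1:ℝ)^ℓ * (K (t*R) + L₂)|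
            ≤ |∫ s in (0:ℝ)..R, g s| + |K (t*R)| + |L₂| := habsI 0
          _ ≤ ((1 + Real.log (π/2 * (7/5)) + (1 + (1/π + 14/25)))
                + Real.log (4*(ℓ:ℝ)^2*κ)) + 14/25 + 1 := by linarith
          _ = (3 + Real.log (π/2 * (7/5)) + 1/π + 28/25) + Real.log (4*(ℓ:ℝ)^2*κ) := by ring
          _ ≤ (1.73*π + Real.log 4 - Real.log π) + Real.log (4*(ℓ:ℝ)^2*κ) := by linarith
    -- final conversion
    have hlogcomb : Real.log 4 - Real.log π + Real.log (4*(ℓ:ℝ)^2*κ)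
        = Real.log (16*(ℓ:ℝ)^2*κ/π) := by
      rw [← Real.log_div (by norm_num) (ne_of_gt hπ0),
        ← Real.log_mul (by positivity) (by positivity)]
      congr 1
      field_simp
      ring
    have hIb' : |(∫ s in (0:ℝ)..R, g s) + (-1:ℝ)^ℓ * (K (t*R) + L₂)| ≤
        1.73*π + Real.log (16*(ℓ:ℝ)^2*κ/π) := by
      rw [← hlogcomb]
      linarith
    have hsqrt : Real.log (16*(ℓ:ℝ)^2*κ/π) = 2 * Real.log (4*(ℓ:ℝ)*Real.sqrt (κ/π)) := by
      have h1 : (4*(ℓ:ℝ)*Real.sqrt (κ/π))^2 = 16*(ℓ:ℝ)^2*κ/π := by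
        rw [mul_pow, mul_pow, Real.sq_sqrt (by positivity)]
        ring
      rw [← h1, Real.log_pow]
      push_cast
      ring
    have habs2 : |1/2 + ((-1:ℝ)^ℓ / π) * ((∫ s in (0:ℝ)..R, g s) + (-1:ℝ)^ℓ * (K (t*R) + L₂))|
        ≤ 1/2 + (1/π) * |(∫ s in (0:ℝ)..R, g s) + (-1:ℝ)^ℓ * (K (t*R) + L₂)| := by
      calc |1/2 + ((-1:ℝ)^ℓ / π) * ((∫ s in (0:ℝ)..R, g s) + (-1:ℝ)^ℓ * (K (t*R) + L₂))|
          ≤ |(1:ℝ)/2| + |((-1:ℝ)^ℓ / π) * ((∫ s in (0:ℝ)..R, g s) + (-1:ℝ)^ℓ * (K (t*R) + L₂))| :=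
            abs_add_le _ _
        _ = 1/2 + (1/π) * |(∫ s in (0:ℝ)..R, g s) + (-1:ℝ)^ℓ * (K (t*R) + L₂)| := by
            have e1 : |(1:ℝ)/2| = 1/2 := by norm_num
            have e2 : |((-1:ℝ)^ℓ / π)| = 1/π := by
              rw [abs_div, abs_pow, abs_neg, abs_one, one_pow, abs_of_pos hπ0]
            rw [e1, abs_mul, e2]
    calc |1/2 + ((-1:ℝ)^ℓ / π) * ((∫ s in (0:ℝ)..R, g s) + (-1:ℝ)^ℓ * (K (t*R) + L₂))|
        ≤ 1/2 + (1/π) * |(∫ s in (0:ℝ)..R, g s) + (-1:ℝ)^ℓ * (K (t*R) + L₂)| := habs2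
      _ ≤ 1/2 + (1/π) * (1.73*π + Real.log (16*(ℓ:ℝ)^2*κ/π)) := by
          have h0 : (0:ℝ) ≤ 1/π := by positivity
          nlinarith [hIb']
      _ = gammaLK ℓ κ := by
          rw [gammaLK, hsqrt]
          field_simp
          ring
end
end

section
/- Let 0 < a < b, Δ := √(b² − ab), T_C(z) := (Δ + z − b)/(Δ − z + b), and â := (b − Δ)/(Δ + b). Then: (i) 0 < â < 1; (ii) T_C maps [a,b] onto [â,1] and maps (−∞,0] into [−1,−â], with T_C(0) = −â, T_C(0) + T_C(a) = 0, T_C(b) = 1, and lim_{z→−∞} T_C(z) = −1; (iii) the map T_C⁻¹(w) := ((b+Δ)w + b−Δ)/(1+w) satisfies T_C⁻¹(T_C(z)) = z for all z in the relevant domain; (iv) 1/â ≤ 4b/a; (v) consequently ρ_{[â,1]} ≤ ρ_{[a,4b]}. -/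
open Matrix Polynomial Set MeasureTheory Filter Topology
open scoped ComplexOrder ENNReal NNReal

noncomputable section

/-- properties of the Möbius transformation `T_C` mapping
`[-∞,0] ∪ [a,b]` onto `[-1,-â] ∪ [â,1]`. -/
theorem mobius_TC (a b : ℝ) (ha : 0 < a) (hab : a < b)
    (Δ : ℝ) (hΔ : Δ = Real.sqrt (b ^ 2 - a * b))
    (TC : ℝ → ℝ) (hTC : ∀ z, TC z = (Δ + z - b) / (Δ - z + b))
    (ahat : ℝ) (hahat : ahat = (b - Δ) / (Δ + b))
    (TCinv : ℝ → ℝ) (hTCinv : ∀ w, TCinv w = ((b + Δ) * w + b - Δ) / (1 + w)) :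
    (0 < ahat ∧ ahat < 1) ∧
    (TC '' Set.Icc a b = Set.Icc ahat 1 ∧
      (∀ z : ℝ, z ≤ 0 → TC z ∈ Set.Icc (-1) (-ahat)) ∧
      TC 0 = -ahat ∧ TC 0 + TC a = 0 ∧ TC b = 1 ∧
      Tendsto TC atBot (𝓝 (-1))) ∧
    (∀ z ∈ Set.Iic (0 : ℝ) ∪ Set.Icc a b, TCinv (TC z) = z) ∧
    1 / ahat ≤ 4 * b / a ∧
    rho ahat 1 ≤ rho a (4 * b) := by
  have hb : 0 < b := ha.trans hab
  have hprod : 0 < b ^ 2 - a * b := by nlinarith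
  have hΔpos : 0 < Δ := by rw [hΔ]; exact Real.sqrt_pos.mpr hprod
  have hΔsq : Δ ^ 2 = b ^ 2 - a * b := by
    rw [hΔ, Real.sq_sqrt hprod.le]
  have hΔlt : Δ < b := by nlinarith [hΔpos, hΔsq]
  have hden : ∀ z : ℝ, z ≤ b → 0 < Δ - z + b := fun z hz => by linarith
  -- the useful alternative form
  have hform : ∀ z : ℝ, z ≤ b → TC z = 2 * Δ / (Δ - z + b) - 1 := by
    intro z hz
    have h := hden z hz
    rw [hTC]
    field_simp
    ring
  have hTC0 : TC 0 = -ahat := by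
    rw [hTC, hahat, show Δ + 0 - b = -(b - Δ) by ring,
      show Δ - 0 + b = Δ + b by ring, neg_div]
  have hTCa : TC a = ahat := by
    rw [hTC, hahat]
    have h1 : Δ + b ≠ 0 := by positivity
    have h2 : Δ - a + b ≠ 0 := ne_of_gt (hden a hab.le)
    field_simp
    nlinarith [hΔsq]
  have hTCb : TC b = 1 := by
    rw [hTC]
    field_simp
    rw [show Δ + b - b = Δ by ring, show Δ - b + b = Δ by ring]; exact div_self hΔpos.ne'
  have hahat_pos : 0 < ahat := by
    rw [hahat]; exact div_pos (by linarith) (by positivity)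
  have hahat_lt : ahat < 1 := by
    rw [hahat, div_lt_one (by positivity)]
    linarith
  -- monotonicity on Iic b
  have hmono : StrictMonoOn TC (Set.Iic b) := by
    intro x hx y hy hxy
    rw [hform x hx, hform y hy]
    have hdx := hden x hx
    have hdy := hden y hy
    have : 2 * Δ / (Δ - x + b) < 2 * Δ / (Δ - y + b) := by
      apply div_lt_div_of_pos_left (by positivity) hdy
      linarith
    linarith
  have hcont : ContinuousOn TC (Set.Icc a b) := by
    have : ContinuousOn (fun z => (Δ + z - b) / (Δ - z + b)) (Set.Icc a b) := by
      apply ContinuousOn.div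
      · fun_prop
      · fun_prop
      · intro z hz
        exact ne_of_gt (hden z hz.2)
    exact this.congr fun z _ => hTC z
  have himage : TC '' Set.Icc a b = Set.Icc ahat 1 := by
    apply Set.Subset.antisymm
    · rintro _ ⟨z, hz, rfl⟩
      constructor
      · rw [← hTCa]
        rcases eq_or_lt_of_le hz.1 with h | h
        · rw [h]
        · exact (hmono (Set.mem_Iic.mpr hab.le) (Set.mem_Iic.mpr hz.2) h).le
      · rw [← hTCb]
        rcases eq_or_lt_of_le hz.2 with h | h
        · rw [h]
        · exact (hmono (Set.mem_Iic.mpr hz.2) (Set.mem_Iic.mpr le_rfl) h).le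
    · have := intermediate_value_Icc hab.le hcont
      rwa [hTCa, hTCb] at this
  have hneg : ∀ z : ℝ, z ≤ 0 → TC z ∈ Set.Icc (-1) (-ahat) := by
    intro z hz
    have hzb : z ≤ b := hz.trans hb.le
    have hd := hden z hzb
    rw [hform z hzb]
    constructor
    · have : 0 < 2 * Δ / (Δ - z + b) := by positivity
      linarith
    · have : TC z ≤ TC 0 := by
        rcases eq_or_lt_of_le hz with h | h
        · rw [h]
        · exact (hmono (Set.mem_Iic.mpr hzb) (Set.mem_Iic.mpr hb.le) h).le
      rw [hform z hzb] at this
      rw [hTC0] at this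
      exact this
  have htend : Tendsto TC atBot (𝓝 (-1)) := by
    have h1 : Tendsto (fun z : ℝ => Δ - z + b) atBot atTop := by
      apply Filter.tendsto_atTop_add_const_right
      apply Filter.tendsto_atTop_add_const_left
      exact tendsto_neg_atBot_atTop
    have h2 : Tendsto (fun z : ℝ => 2 * Δ / (Δ - z + b) - 1) atBot (𝓝 (0 - 1)) := by
      exact (Tendsto.div_atTop tendsto_const_nhds h1).sub tendsto_const_nhds
    rw [zero_sub] at h2
    apply h2.congr'
    filter_upwards [Filter.eventually_le_atBot b] with z hz
    exact (hform z hz).symm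
  have hinv : ∀ z ∈ Set.Iic (0 : ℝ) ∪ Set.Icc a b, TCinv (TC z) = z := by
    intro z hz
    have hzb : z ≤ b := by
      rcases hz with h | h
      · exact h.trans hb.le
      · exact h.2
    have hd := hden z hzb
    have h1 : 1 + TC z = 2 * Δ / (Δ - z + b) := by
      rw [hform z hzb]; ring
    have h1pos : 0 < 1 + TC z := by rw [h1]; positivity
    rw [hTCinv, hTC]
    have hTCz : (Δ + z - b) / (Δ - z + b) = TC z := (hTC z).symm
    field_simp
    rw [show Δ - z + b + (Δ + z - b) = 2 * Δ by ring, div_eq_iff (by positivity)]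
    nlinarith [hΔsq]
  have hineq : 1 / ahat ≤ 4 * b / a := by
    have hbd : 0 < b - Δ := by linarith
    rw [hahat, one_div_div, div_le_div_iff₀ hbd ha]
    have key : (Δ + b) * a * (Δ + b) ≤ 4 * b * (b - Δ) * (Δ + b) := by
      nlinarith [hΔsq, mul_nonneg (mul_nonneg ha.le hbd.le)
        (by positivity : (0:ℝ) ≤ 3 * b + Δ)]
    exact le_of_mul_le_mul_right key (by positivity)
  refine ⟨⟨hahat_pos, hahat_lt⟩, ⟨himage, hneg, hTC0, by rw [hTC0, hTCa]; ring, hTCb, htend⟩,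
    hinv, hineq, ?_⟩
  -- rho monotonicity
  unfold rho
  apply Real.exp_le_exp.mpr
  have h4a : (1:ℝ) < 4 * 1 / ahat := by
    rw [mul_one]
    rw [lt_div_iff₀ hahat_pos]
    linarith
  have h4b : (1:ℝ) < 4 * (4 * b) / a := by
    rw [lt_div_iff₀ ha]
    nlinarith
  have hlog1 : 0 < Real.log (4 * 1 / ahat) := Real.log_pos h4a
  have hlog2 : 0 < Real.log (4 * (4 * b) / a) := Real.log_pos h4b
  have hle : Real.log (4 * 1 / ahat) ≤ Real.log (4 * (4 * b) / a) := by
    apply Real.log_le_log (by positivity)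
    have h1 : 4 * 1 / ahat = 4 * (1 / ahat) := by ring
    have h2 : 4 * (4 * b) / a = 4 * (4 * b / a) := by ring
    rw [h1, h2]
    linarith
  rw [div_le_div_iff₀ hlog1 hlog2]
  nlinarith [sq_nonneg Real.pi, hle, hlog1, hlog2]
end
end

section
/- Let γ > 0 and let g : [0,γ] → ℝ be a continuously differentiable function that is nonincreasing (g′(s) ≤ 0 on [0,γ]) and positive. Then |∫₀^γ (sin(s)·g(s))/s ds| ≤ 1.852 · g(0). -/
open Matrix Polynomial Set MeasureTheory Filter Topology
open scoped ComplexOrder ENNReal NNReal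

noncomputable section

set_option maxHeartbeats 1000000

section SincAux
open Real intervalIntegral

lemma le_on_Ici {F G f g : ℝ → ℝ} (hF : ∀ t, HasDerivAt F (f t) t)
    (hG : ∀ t, HasDerivAt G (g t) t) (h0 : F 0 ≤ G 0)
    (hfg : ∀ t, 0 ≤ t → f t ≤ g t) : ∀ t, 0 ≤ t → F t ≤ G t := by
  intro t ht
  have hmono : MonotoneOn (fun t => G t - F t) (Ici 0) := by
    apply monotoneOn_of_deriv_nonneg (convex_Ici 0)
    · exact (Continuous.sub (continuous_iff_continuousAt.2 fun x => (hG x).continuousAt)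
        (continuous_iff_continuousAt.2 fun x => (hF x).continuousAt)).continuousOn
    · intro x _; exact ((hG x).sub (hF x)).differentiableAt.differentiableWithinAt
    · intro x hx
      rw [interior_Ici] at hx
      rw [show (fun t => G t - F t) = G - F from rfl, ((hG x).sub (hF x)).deriv]
      exact sub_nonneg.2 (hfg x hx.le)
  have := hmono self_mem_Ici (mem_Ici.2 ht) ht
  simp only at this
  linarith

lemma cos_ge_deg2 : ∀ t, 0 ≤ t → 1 - t^2/2 ≤ Real.cos t := by
  apply le_on_Ici (f := fun t => -t) (g := fun t => -Real.sin t)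
  · intro t
    have := ((hasDerivAt_pow 2 t).div_const 2).const_sub 1
    exact this.congr_deriv (by push_cast; ring)
  · intro t; simpa using Real.hasDerivAt_cos t
  · norm_num
  · intro t ht; simpa using Real.sin_le ht

lemma sin_ge_deg3 : ∀ t, 0 ≤ t → t - t^3/6 ≤ Real.sin t := by
  apply le_on_Ici (f := fun t => 1 - t^2/2) (g := fun t => Real.cos t)
  · intro t
    have := (hasDerivAt_id t).sub ((hasDerivAt_pow 3 t).div_const 6)
    exact this.congr_deriv (by push_cast; ring)
  · exact Real.hasDerivAt_sin
  · norm_num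
  · exact cos_ge_deg2

lemma cos_le_deg4 : ∀ t, 0 ≤ t → Real.cos t ≤ 1 - t^2/2 + t^4/24 := by
  apply le_on_Ici (f := fun t => -Real.sin t) (g := fun t => -t + t^3/6)
  · intro t; simpa using Real.hasDerivAt_cos t
  · intro t
    have := (((hasDerivAt_pow 2 t).div_const 2).const_sub 1).add ((hasDerivAt_pow 4 t).div_const 24)
    exact this.congr_deriv (by push_cast; ring)
  · norm_num
  · intro t ht; have := sin_ge_deg3 t ht; linarith

lemma sin_le_deg5 : ∀ t, 0 ≤ t → Real.sin t ≤ t - t^3/6 + t^5/120 := by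
  apply le_on_Ici (f := fun t => Real.cos t) (g := fun t => 1 - t^2/2 + t^4/24)
  · exact Real.hasDerivAt_sin
  · intro t
    have := (((hasDerivAt_id t).sub ((hasDerivAt_pow 3 t).div_const 6)).add
      ((hasDerivAt_pow 5 t).div_const 120))
    exact this.congr_deriv (by push_cast; ring)
  · norm_num
  · exact cos_le_deg4

lemma cos_ge_deg6 : ∀ t, 0 ≤ t → 1 - t^2/2 + t^4/24 - t^6/720 ≤ Real.cos t := by
  apply le_on_Ici (f := fun t => -t + t^3/6 - t^5/120) (g := fun t => -Real.sin t)
  · intro t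
    have := ((((hasDerivAt_pow 2 t).div_const 2).const_sub 1).add
      ((hasDerivAt_pow 4 t).div_const 24)).sub ((hasDerivAt_pow 6 t).div_const 720)
    exact this.congr_deriv (by push_cast; ring)
  · intro t; simpa using Real.hasDerivAt_cos t
  · norm_num
  · intro t ht; have := sin_le_deg5 t ht; linarith

lemma sin_ge_deg7 : ∀ t, 0 ≤ t → t - t^3/6 + t^5/120 - t^7/5040 ≤ Real.sin t := by
  apply le_on_Ici (f := fun t => 1 - t^2/2 + t^4/24 - t^6/720) (g := fun t => Real.cos t)
  · intro t
    have := ((((hasDerivAt_id t).sub ((hasDerivAt_pow 3 t).div_const 6)).add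
      ((hasDerivAt_pow 5 t).div_const 120)).sub ((hasDerivAt_pow 7 t).div_const 5040))
    exact this.congr_deriv (by push_cast; ring)
  · exact Real.hasDerivAt_sin
  · norm_num
  · exact cos_ge_deg6

lemma cos_le_deg8 : ∀ t, 0 ≤ t → Real.cos t ≤ 1 - t^2/2 + t^4/24 - t^6/720 + t^8/40320 := by
  apply le_on_Ici (f := fun t => -Real.sin t)
    (g := fun t => -t + t^3/6 - t^5/120 + t^7/5040)
  · intro t; simpa using Real.hasDerivAt_cos t
  · intro t
    have := (((((hasDerivAt_pow 2 t).div_const 2).const_sub 1).add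
      ((hasDerivAt_pow 4 t).div_const 24)).sub ((hasDerivAt_pow 6 t).div_const 720)).add
      ((hasDerivAt_pow 8 t).div_const 40320)
    exact this.congr_deriv (by push_cast; ring)
  · norm_num
  · intro t ht; have := sin_ge_deg7 t ht; linarith

lemma sin_le_deg9 : ∀ t, 0 ≤ t →
    Real.sin t ≤ t - t^3/6 + t^5/120 - t^7/5040 + t^9/362880 := by
  apply le_on_Ici (f := fun t => Real.cos t)
    (g := fun t => 1 - t^2/2 + t^4/24 - t^6/720 + t^8/40320)
  · exact Real.hasDerivAt_sin
  · intro t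
    have := (((((hasDerivAt_id t).sub ((hasDerivAt_pow 3 t).div_const 6)).add
      ((hasDerivAt_pow 5 t).div_const 120)).sub ((hasDerivAt_pow 7 t).div_const 5040)).add
      ((hasDerivAt_pow 9 t).div_const 362880))
    exact this.congr_deriv (by push_cast; ring)
  · norm_num
  · exact cos_le_deg8

lemma cos_ge_deg10 : ∀ t, 0 ≤ t →
    1 - t^2/2 + t^4/24 - t^6/720 + t^8/40320 - t^10/3628800 ≤ Real.cos t := by
  apply le_on_Ici (f := fun t => -t + t^3/6 - t^5/120 + t^7/5040 - t^9/362880)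
    (g := fun t => -Real.sin t)
  · intro t
    have := ((((((hasDerivAt_pow 2 t).div_const 2).const_sub 1).add
      ((hasDerivAt_pow 4 t).div_const 24)).sub ((hasDerivAt_pow 6 t).div_const 720)).add
      ((hasDerivAt_pow 8 t).div_const 40320)).sub ((hasDerivAt_pow 10 t).div_const 3628800)
    exact this.congr_deriv (by push_cast; ring)
  · intro t; simpa using Real.hasDerivAt_cos t
  · norm_num
  · intro t ht; have := sin_le_deg9 t ht; linarith

lemma sin_ge_deg11 : ∀ t, 0 ≤ t →
    t - t^3/6 + t^5/120 - t^7/5040 + t^9/362880 - t^11/39916800 ≤ Real.sin t := by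
  apply le_on_Ici (f := fun t => 1 - t^2/2 + t^4/24 - t^6/720 + t^8/40320 - t^10/3628800)
    (g := fun t => Real.cos t)
  · intro t
    have := ((((((hasDerivAt_id t).sub ((hasDerivAt_pow 3 t).div_const 6)).add
      ((hasDerivAt_pow 5 t).div_const 120)).sub ((hasDerivAt_pow 7 t).div_const 5040)).add
      ((hasDerivAt_pow 9 t).div_const 362880)).sub ((hasDerivAt_pow 11 t).div_const 39916800))
    exact this.congr_deriv (by push_cast; ring)
  · exact Real.hasDerivAt_sin
  · norm_num
  · exact cos_ge_deg10

lemma cos_le_deg12 : ∀ t, 0 ≤ t →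
    Real.cos t ≤ 1 - t^2/2 + t^4/24 - t^6/720 + t^8/40320 - t^10/3628800 + t^12/479001600 := by
  apply le_on_Ici (f := fun t => -Real.sin t)
    (g := fun t => -t + t^3/6 - t^5/120 + t^7/5040 - t^9/362880 + t^11/39916800)
  · intro t; simpa using Real.hasDerivAt_cos t
  · intro t
    have := (((((((hasDerivAt_pow 2 t).div_const 2).const_sub 1).add
      ((hasDerivAt_pow 4 t).div_const 24)).sub ((hasDerivAt_pow 6 t).div_const 720)).add
      ((hasDerivAt_pow 8 t).div_const 40320)).sub
      ((hasDerivAt_pow 10 t).div_const 3628800)).add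
      ((hasDerivAt_pow 12 t).div_const 479001600)
    exact this.congr_deriv (by push_cast; ring)
  · norm_num
  · intro t ht; have := sin_ge_deg11 t ht; linarith

lemma sin_le_deg13 : ∀ t, 0 ≤ t →
    Real.sin t ≤ t - t^3/6 + t^5/120 - t^7/5040 + t^9/362880 - t^11/39916800
      + t^13/6227020800 := by
  apply le_on_Ici (f := fun t => Real.cos t)
    (g := fun t => 1 - t^2/2 + t^4/24 - t^6/720 + t^8/40320 - t^10/3628800 + t^12/479001600)
  · exact Real.hasDerivAt_sin
  · intro t
    have := (((((((hasDerivAt_id t).sub ((hasDerivAt_pow 3 t).div_const 6)).add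
      ((hasDerivAt_pow 5 t).div_const 120)).sub ((hasDerivAt_pow 7 t).div_const 5040)).add
      ((hasDerivAt_pow 9 t).div_const 362880)).sub
      ((hasDerivAt_pow 11 t).div_const 39916800)).add
      ((hasDerivAt_pow 13 t).div_const 6227020800))
    exact this.congr_deriv (by push_cast; ring)
  · norm_num
  · exact cos_le_deg12

noncomputable def mysinc (t : ℝ) : ℝ := if t = 0 then 1 else Real.sin t / t

lemma mysinc_continuous : Continuous mysinc := by
  rw [continuous_iff_continuousAt]
  intro x
  rcases eq_or_ne x 0 with rfl | hx
  · have h1 : Tendsto (slope Real.sin 0) (𝓝[≠] 0) (𝓝 1) := by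
      have := Real.hasDerivAt_sin 0
      rw [hasDerivAt_iff_tendsto_slope] at this
      simpa using this
    have h2 : Tendsto mysinc (𝓝[≠] 0) (𝓝 1) := by
      apply h1.congr'
      filter_upwards [self_mem_nhdsWithin] with y hy
      have hy' : y ≠ 0 := hy
      simp [slope, mysinc, hy', div_eq_inv_mul]
    have h3 : Tendsto mysinc (pure (0:ℝ)) (𝓝 1) := by
      have := tendsto_pure_nhds mysinc 0
      simpa [mysinc] using this
    have : Tendsto mysinc (𝓝 (0:ℝ)) (𝓝 1) := by
      rw [← nhdsNE_sup_pure (0:ℝ), tendsto_sup]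
      exact ⟨h2, h3⟩
    simpa [ContinuousAt, mysinc] using this
  · have h : ContinuousAt (fun t => Real.sin t / t) x :=
      Real.continuous_sin.continuousAt.div continuousAt_id hx
    apply h.congr
    filter_upwards [eventually_ne_nhds hx] with y hy
    simp [mysinc, hy]

lemma mysinc_intable (a b : ℝ) : IntervalIntegrable mysinc volume a b :=
  mysinc_continuous.intervalIntegrable a b

noncomputable def Fsi (x : ℝ) : ℝ := ∫ t in (0:ℝ)..x, mysinc t

lemma Fsi_hasDerivAt (x : ℝ) : HasDerivAt Fsi (mysinc x) x :=
  integral_hasDerivAt_right (mysinc_intable 0 x)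
    (mysinc_continuous.stronglyMeasurableAtFilter _ _) mysinc_continuous.continuousAt

lemma mysinc_nonneg_pi {t : ℝ} (h0 : 0 ≤ t) (hpi : t ≤ π) : 0 ≤ mysinc t := by
  rcases eq_or_ne t 0 with rfl | ht
  · norm_num [mysinc]
  · have := Real.sin_nonneg_of_nonneg_of_le_pi h0 hpi
    simp only [mysinc, ht, if_false]
    positivity

lemma mysinc_le_poly {t : ℝ} (h0 : 0 ≤ t) :
    mysinc t ≤ 1 - t^2/6 + t^4/120 - t^6/5040 + t^8/362880 - t^10/39916800
      + t^12/6227020800 := by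
  rcases eq_or_ne t 0 with rfl | ht
  · norm_num [mysinc]
  · have hpos : 0 < t := lt_of_le_of_ne h0 (Ne.symm ht)
    have hs : Real.sin t ≤ t - t^3/6 + t^5/120 - t^7/5040 + t^9/362880 - t^11/39916800
      + t^13/6227020800 := sin_le_deg13 t h0
    simp only [mysinc, ht, if_false]
    rw [div_le_iff₀ hpos]
    calc Real.sin t ≤ _ := hs
    _ = (1 - t^2/6 + t^4/120 - t^6/5040 + t^8/362880 - t^10/39916800 + t^12/6227020800) * t := by
        ring

lemma Fsi_pi_le : Fsi π ≤ 1.852 := by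
  have hpi : (0:ℝ) ≤ π := Real.pi_nonneg
  have h1 : Fsi π ≤ ∫ t in (0:ℝ)..π, (1 - t^2/6 + t^4/120 - t^6/5040 + t^8/362880
      - t^10/39916800 + t^12/6227020800) := by
    apply intervalIntegral.integral_mono_on hpi (mysinc_intable 0 π)
    · apply Continuous.intervalIntegrable; fun_prop
    · intro x hx; exact mysinc_le_poly hx.1
  have h2 : ∫ t in (0:ℝ)..π, (1 - t^2/6 + t^4/120 - t^6/5040 + t^8/362880
      - t^10/39916800 + t^12/6227020800)
      = π - π^3/18 + π^5/600 - π^7/35280 + π^9/3265920 - π^11/439084800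
        + π^13/80951270400 := by
    have : ∀ x ∈ uIcc (0:ℝ) π, HasDerivAt
        (fun t => t - t^3/18 + t^5/600 - t^7/35280 + t^9/3265920 - t^11/439084800
          + t^13/80951270400)
        (1 - x^2/6 + x^4/120 - x^6/5040 + x^8/362880 - x^10/39916800 + x^12/6227020800) x := by
      intro x _
      have := (((((((hasDerivAt_id x).sub ((hasDerivAt_pow 3 x).div_const 18)).add
        ((hasDerivAt_pow 5 x).div_const 600)).sub ((hasDerivAt_pow 7 x).div_const 35280)).add
        ((hasDerivAt_pow 9 x).div_const 3265920)).sub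
        ((hasDerivAt_pow 11 x).div_const 439084800)).add
        ((hasDerivAt_pow 13 x).div_const 80951270400))
      exact this.congr_deriv (by push_cast; ring)
    rw [intervalIntegral.integral_eq_sub_of_hasDerivAt this
      (by apply Continuous.intervalIntegrable; fun_prop)]
    norm_num
  have ha : (3.141592:ℝ) ≤ π := Real.pi_gt_d6.le
  have hb : π ≤ 3.141593 := Real.pi_lt_d6.le
  have ha' : (0:ℝ) ≤ 3.141592 := by norm_num
  have p3 : (3.141592:ℝ)^3 ≤ π^3 := pow_le_pow_left₀ ha' ha 3
  have p5 : π^5 ≤ (3.141593:ℝ)^5 := pow_le_pow_left₀ hpi hb 5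
  have p7 : (3.141592:ℝ)^7 ≤ π^7 := pow_le_pow_left₀ ha' ha 7
  have p9 : π^9 ≤ (3.141593:ℝ)^9 := pow_le_pow_left₀ hpi hb 9
  have p11 : (3.141592:ℝ)^11 ≤ π^11 := pow_le_pow_left₀ ha' ha 11
  have p13 : π^13 ≤ (3.141593:ℝ)^13 := pow_le_pow_left₀ hpi hb 13
  have hnum : (3.141593:ℝ) - 3.141592^3/18 + 3.141593^5/600 - 3.141592^7/35280
      + 3.141593^9/3265920 - 3.141592^11/439084800 + 3.141593^13/80951270400 ≤ 1.852 := by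
    norm_num
  rw [h2] at h1
  linarith

lemma Fsi_pi_ge : (1:ℝ) ≤ Fsi π := by
  have h2pi : (0:ℝ) < π := Real.pi_pos
  have hhalf : (0:ℝ) ≤ π/2 := by linarith
  have hsplit : Fsi π = (∫ t in (0:ℝ)..(π/2), mysinc t) + ∫ t in (π/2)..π, mysinc t :=
    (intervalIntegral.integral_add_adjacent_intervals (mysinc_intable _ _)
      (mysinc_intable _ _)).symm
  have hA : (1:ℝ) ≤ ∫ t in (0:ℝ)..(π/2), mysinc t := by
    have : ∫ t in (0:ℝ)..(π/2), (2/π) = 1 := by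
      simp
    rw [← this]
    apply intervalIntegral.integral_mono_on hhalf
      (by apply Continuous.intervalIntegrable; fun_prop) (mysinc_intable _ _)
    intro x hx
    rcases eq_or_ne x 0 with rfl | hx0
    · have h3 := Real.pi_gt_three
      simp [mysinc]
      rw [div_le_one h2pi]; linarith
    · have hxpos : 0 < x := lt_of_le_of_ne hx.1 (Ne.symm hx0)
      simp only [mysinc, hx0, if_false]
      rw [le_div_iff₀ hxpos]
      exact Real.mul_le_sin hx.1 hx.2
  have hB : (0:ℝ) ≤ ∫ t in (π/2)..π, mysinc t := by
    apply intervalIntegral.integral_nonneg (by linarith)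
    intro u hu
    exact mysinc_nonneg_pi (le_trans hhalf hu.1) hu.2
  linarith

lemma sin_nonpos_2pi {t : ℝ} (h1 : π ≤ t) (h2 : t ≤ 2*π) : Real.sin t ≤ 0 := by
  have : 0 ≤ Real.sin (t - π) := Real.sin_nonneg_of_nonneg_of_le_pi (by linarith) (by linarith)
  rw [Real.sin_sub_pi] at this
  linarith

lemma mysinc_nonpos_2pi {t : ℝ} (h1 : π ≤ t) (h2 : t ≤ 2*π) : mysinc t ≤ 0 := by
  have ht : t ≠ 0 := by have := Real.pi_pos; intro h; rw [h] at h1; linarith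
  simp only [mysinc, ht, if_false]
  exact div_nonpos_iff.2 (Or.inr ⟨sin_nonpos_2pi h1 h2, by have := Real.pi_pos; linarith⟩)

lemma int_sin_div (c x d : ℝ) (hd : d ≠ 0) :
    ∫ t in c..x, Real.sin t / d = (Real.cos c - Real.cos x) / d := by
  rw [intervalIntegral.integral_eq_sub_of_hasDerivAt
    (f := fun t => -Real.cos t / d) (f' := fun t => Real.sin t / d)
    (fun t _ => by simpa using ((Real.hasDerivAt_cos t).neg.div_const d))
    (by apply Continuous.intervalIntegrable; fun_prop)]
  ring

lemma mid_lower {x : ℝ} (h1 : π ≤ x) (h2 : x ≤ 2*π) :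
    -(2/π) ≤ ∫ t in π..x, mysinc t := by
  have hpi := Real.pi_pos
  have hmono : ∫ t in π..x, Real.sin t / π ≤ ∫ t in π..x, mysinc t := by
    apply intervalIntegral.integral_mono_on h1
      (by apply Continuous.intervalIntegrable; fun_prop) (mysinc_intable _ _)
    intro t ht
    have htpos : 0 < t := by linarith [ht.1]
    have hts : Real.sin t ≤ 0 := sin_nonpos_2pi ht.1 (le_trans ht.2 h2)
    have ht0 : t ≠ 0 := ne_of_gt htpos
    simp only [mysinc, ht0, if_false]
    rw [div_le_div_iff₀ hpi htpos]
    nlinarith [ht.1]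
  rw [int_sin_div π x π (ne_of_gt hpi)] at hmono
  have hc : Real.cos π - Real.cos x ≥ -2 := by
    have := Real.cos_le_one x; rw [Real.cos_pi]; linarith
  have : -(2/π) ≤ (Real.cos π - Real.cos x) / π := by
    rw [(by ring : -(2/π) = (-2)/π), div_le_div_iff_of_pos_right hpi]
    linarith
  linarith

lemma mid_upper : ∫ t in π..(2*π), mysinc t ≤ -(1/π) := by
  have hpi := Real.pi_pos
  have hmono : ∫ t in π..(2*π), mysinc t ≤ ∫ t in π..(2*π), Real.sin t / (2*π) := by
    apply intervalIntegral.integral_mono_on (by linarith) (mysinc_intable _ _)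
      (by apply Continuous.intervalIntegrable; fun_prop)
    intro t ht
    have htpos : 0 < t := by linarith [ht.1]
    have hts : Real.sin t ≤ 0 := sin_nonpos_2pi ht.1 ht.2
    have ht0 : t ≠ 0 := ne_of_gt htpos
    simp only [mysinc, ht0, if_false]
    rw [div_le_div_iff₀ htpos (by linarith : (0:ℝ) < 2*π)]
    nlinarith [ht.2]
  rw [int_sin_div π (2*π) (2*π) (by positivity)] at hmono
  rw [Real.cos_pi, Real.cos_two_pi] at hmono
  calc ∫ t in π..(2*π), mysinc t ≤ (-1 - 1)/(2*π) := hmono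
  _ = -(1/π) := by field_simp; ring

lemma tail_bound {x : ℝ} (hx : 2*π ≤ x) : |∫ t in (2*π)..x, mysinc t| ≤ 1/π := by
  have hpi := Real.pi_pos
  have h2pi : (0:ℝ) < 2*π := by linarith
  have hne : ∀ t ∈ Icc (2*π) x, t ≠ 0 := fun t ht => by
    have := ht.1; intro h; rw [h] at this; linarith
  have huicc : uIcc (2*π) x = Icc (2*π) x := uIcc_of_le hx
  -- rewrite mysinc as t⁻¹ * sin t
  have hcong : ∫ t in (2*π)..x, mysinc t = ∫ t in (2*π)..x, t⁻¹ * Real.sin t := by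
    apply intervalIntegral.integral_congr
    intro t ht
    rw [huicc] at ht
    simp [mysinc, hne t ht, div_eq_inv_mul]
  have hinv2 : ContinuousOn (fun t : ℝ => (t^2)⁻¹) (Icc (2*π) x) := by
    apply ContinuousOn.inv₀ (by fun_prop)
    intro t ht; exact pow_ne_zero 2 (hne t ht)
  have hibp : ∫ t in (2*π)..x, t⁻¹ * Real.sin t
      = x⁻¹ * (-Real.cos x) - (2*π)⁻¹ * (-Real.cos (2*π))
        - ∫ t in (2*π)..x, (-(t^2)⁻¹) * (-Real.cos t) := by
    apply intervalIntegral.integral_mul_deriv_eq_deriv_mul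
      (u := fun t => t⁻¹) (u' := fun t => -(t^2)⁻¹)
      (v := fun t => -Real.cos t) (v' := Real.sin)
    · intro t ht; rw [huicc] at ht; exact hasDerivAt_inv (hne t ht)
    · intro t _; simpa using (Real.hasDerivAt_cos t).fun_neg
    · rw [intervalIntegrable_iff_integrableOn_Icc_of_le hx]
      exact (hinv2.neg).integrableOn_compact isCompact_Icc
    · exact Real.continuous_sin.intervalIntegrable _ _
  have hIcos : |∫ t in (2*π)..x, (-(t^2)⁻¹) * (-Real.cos t)| ≤ (2*π)⁻¹ - x⁻¹ := by
    have habs : |∫ t in (2*π)..x, (-(t^2)⁻¹) * (-Real.cos t)|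
        ≤ ∫ t in (2*π)..x, |(-(t^2)⁻¹) * (-Real.cos t)| :=
      intervalIntegral.abs_integral_le_integral_abs hx
    have hmono : ∫ t in (2*π)..x, |(-(t^2)⁻¹) * (-Real.cos t)|
        ≤ ∫ t in (2*π)..x, (t^2)⁻¹ := by
      apply intervalIntegral.integral_mono_on hx
      · rw [intervalIntegrable_iff_integrableOn_Icc_of_le hx]
        exact ((hinv2.neg.mul (by fun_prop)).abs).integrableOn_compact isCompact_Icc
      · rw [intervalIntegrable_iff_integrableOn_Icc_of_le hx]
        exact hinv2.integrableOn_compact isCompact_Icc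
      · intro t ht
        have h1 : (0:ℝ) ≤ (t^2)⁻¹ := by positivity
        rw [abs_mul, abs_neg, abs_neg, abs_inv, abs_pow, sq_abs]
        calc (t^2)⁻¹ * |Real.cos t| ≤ (t^2)⁻¹ * 1 :=
          mul_le_mul_of_nonneg_left (Real.abs_cos_le_one t) h1
        _ = (t^2)⁻¹ := mul_one _
    have hint : ∫ t in (2*π)..x, (t^2)⁻¹ = (2*π)⁻¹ - x⁻¹ := by
      rw [intervalIntegral.integral_eq_sub_of_hasDerivAt
        (f := fun t => -t⁻¹) (f' := fun t => (t^2)⁻¹)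
        (fun t ht => by
          rw [huicc] at ht
          simpa using (hasDerivAt_inv (hne t ht)).fun_neg)
        (by rw [intervalIntegrable_iff_integrableOn_Icc_of_le hx]
            exact hinv2.integrableOn_compact isCompact_Icc)]
      ring
    rw [hint] at hmono
    linarith
  rw [hcong, hibp]
  have hxpos : 0 < x := by linarith
  have h1 : |x⁻¹ * (-Real.cos x)| ≤ x⁻¹ := by
    rw [abs_mul, abs_neg, abs_inv, abs_of_pos hxpos]
    calc x⁻¹ * |Real.cos x| ≤ x⁻¹ * 1 :=
      mul_le_mul_of_nonneg_left (Real.abs_cos_le_one x) (by positivity)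
    _ = x⁻¹ := mul_one _
  have h2 : |(2*π)⁻¹ * (-Real.cos (2*π))| = (2*π)⁻¹ := by
    rw [Real.cos_two_pi, abs_mul, abs_neg, abs_one, mul_one, abs_of_pos (inv_pos.2 h2pi)]
  have hxinv : x⁻¹ ≤ (2*π)⁻¹ := by
    apply inv_anti₀ h2pi hx
  calc |x⁻¹ * (-Real.cos x) - (2*π)⁻¹ * (-Real.cos (2*π))
      - ∫ t in (2*π)..x, (-(t^2)⁻¹) * (-Real.cos t)|
      ≤ |x⁻¹ * (-Real.cos x)| + |(2*π)⁻¹ * (-Real.cos (2*π))|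
        + |∫ t in (2*π)..x, (-(t^2)⁻¹) * (-Real.cos t)| := by
        calc |x⁻¹ * (-Real.cos x) - (2*π)⁻¹ * (-Real.cos (2*π))
            - ∫ t in (2*π)..x, (-(t^2)⁻¹) * (-Real.cos t)|
            ≤ |x⁻¹ * (-Real.cos x) - (2*π)⁻¹ * (-Real.cos (2*π))|
              + |∫ t in (2*π)..x, (-(t^2)⁻¹) * (-Real.cos t)| := abs_sub _ _
        _ ≤ _ := by
            have := abs_sub (x⁻¹ * (-Real.cos x)) ((2*π)⁻¹ * (-Real.cos (2*π)))
            linarith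
  _ ≤ x⁻¹ + (2*π)⁻¹ + ((2*π)⁻¹ - x⁻¹) := by linarith
  _ = 1/π := by field_simp; ring

lemma Fsi_split (a b : ℝ) : Fsi b = Fsi a + ∫ t in a..b, mysinc t :=
  (intervalIntegral.integral_add_adjacent_intervals (mysinc_intable 0 a)
    (mysinc_intable a b)).symm

lemma Fsi_bounds {x : ℝ} (hx : 0 ≤ x) : 0 ≤ Fsi x ∧ Fsi x ≤ 1.852 := by
  have hpi := Real.pi_gt_three
  have hpipos := Real.pi_pos
  have hFpile := Fsi_pi_le
  have hFpige := Fsi_pi_ge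
  rcases le_or_gt x π with h1 | h1
  · constructor
    · exact intervalIntegral.integral_nonneg hx
        (fun u hu => mysinc_nonneg_pi hu.1 (le_trans hu.2 h1))
    · have : Fsi π = Fsi x + ∫ t in x..π, mysinc t := Fsi_split x π
      have h2 : 0 ≤ ∫ t in x..π, mysinc t :=
        intervalIntegral.integral_nonneg h1
          (fun u hu => mysinc_nonneg_pi (le_trans hx hu.1) hu.2)
      linarith
  rcases le_or_gt x (2*π) with h2 | h2
  · have hsp : Fsi x = Fsi π + ∫ t in π..x, mysinc t := Fsi_split π x
    constructor
    · have := mid_lower h1.le h2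
      have h2pi : 2/π ≤ 1 := by
        rw [div_le_one hpipos]; linarith
      linarith
    · have hle : ∫ t in π..x, mysinc t ≤ 0 := by
        have h4 : ∫ t in π..x, mysinc t ≤ ∫ t in π..x, (0:ℝ) := by
          apply intervalIntegral.integral_mono_on h1.le (mysinc_intable _ _)
            (by apply Continuous.intervalIntegrable; fun_prop)
          exact fun u hu => mysinc_nonpos_2pi hu.1 (le_trans hu.2 h2)
        simpa using h4
      linarith
  · have hsp : Fsi x = Fsi π + (∫ t in π..(2*π), mysinc t) + ∫ t in (2*π)..x, mysinc t := by
      have e1 : Fsi (2*π) = Fsi π + ∫ t in π..(2*π), mysinc t := Fsi_split π (2*π)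
      have e2 : Fsi x = Fsi (2*π) + ∫ t in (2*π)..x, mysinc t := Fsi_split (2*π) x
      linarith
    have hmidu := mid_upper
    have hmidl := mid_lower (by linarith) (le_refl (2*π))
    have htail := tail_bound h2.le
    rw [abs_le] at htail
    constructor
    · have h3pi : 3/π ≤ 1 := by rw [div_le_one hpipos]; linarith
      have : 2/π + 1/π = 3/π := by ring
      linarith [htail.1]
    · linarith [htail.2]

end SincAux

/-- bound for the integral of the sinc function against a decreasing
positive `C¹` weight. -/
theorem sinc_weighted_integral_bound (γ : ℝ) (hγ : 0 < γ) (g g' : ℝ → ℝ)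
    (hderiv : ∀ s ∈ Set.Icc (0 : ℝ) γ, HasDerivAt g (g' s) s)
    (hcont : ContinuousOn g' (Set.Icc 0 γ))
    (hdec : ∀ s ∈ Set.Icc (0 : ℝ) γ, g' s ≤ 0)
    (hpos : ∀ s ∈ Set.Icc (0 : ℝ) γ, 0 < g s) :
    |∫ s in (0 : ℝ)..γ, Real.sin s * g s / s| ≤ 1.852 * g 0 := by
  have huicc : uIcc (0:ℝ) γ = Icc 0 γ := uIcc_of_le hγ.le
  have hg'int : IntervalIntegrable g' volume 0 γ :=
    ContinuousOn.intervalIntegrable (by rwa [huicc])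
  have hFg : ∫ s in (0:ℝ)..γ, g s * mysinc s
      = g γ * Fsi γ - g 0 * Fsi 0 - ∫ s in (0:ℝ)..γ, g' s * Fsi s :=
    intervalIntegral.integral_mul_deriv_eq_deriv_mul
      (fun x hx => hderiv x (by rwa [huicc] at hx))
      (fun x _ => Fsi_hasDerivAt x) hg'int (mysinc_intable 0 γ)
  have hFsi0 : Fsi 0 = 0 := intervalIntegral.integral_same
  have hEq : ∫ s in (0:ℝ)..γ, Real.sin s * g s / s = ∫ s in (0:ℝ)..γ, g s * mysinc s := by
    apply intervalIntegral.integral_congr_ae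
    have h0 : ∀ᵐ (s : ℝ), s ≠ 0 := by
      rw [MeasureTheory.ae_iff]
      have : {a : ℝ | ¬ a ≠ 0} = {0} := by ext a; simp
      rw [this]
      exact Real.volume_singleton
    filter_upwards [h0] with s hs _
    simp only [mysinc, hs, if_false]
    field_simp
  have hFsiCont : Continuous Fsi :=
    continuous_iff_continuousAt.2 fun x => (Fsi_hasDerivAt x).continuousAt
  have hg'Fint : IntervalIntegrable (fun s => g' s * Fsi s) volume 0 γ :=
    ContinuousOn.intervalIntegrable (by rw [huicc]; exact hcont.mul hFsiCont.continuousOn)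
  have hI2 : ∫ s in (0:ℝ)..γ, g' s = g γ - g 0 :=
    intervalIntegral.integral_eq_sub_of_hasDerivAt
      (fun x hx => hderiv x (by rwa [huicc] at hx)) hg'int
  have hI1 : (1.852:ℝ) * (g γ - g 0) ≤ ∫ s in (0:ℝ)..γ, g' s * Fsi s := by
    have hm : ∫ s in (0:ℝ)..γ, g' s * 1.852 ≤ ∫ s in (0:ℝ)..γ, g' s * Fsi s := by
      apply intervalIntegral.integral_mono_on hγ.le (hg'int.mul_const _) hg'Fint
      intro s hs
      exact mul_le_mul_of_nonpos_left (Fsi_bounds hs.1).2 (hdec s hs)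
    have he : ∫ s in (0:ℝ)..γ, g' s * 1.852 = (g γ - g 0) * 1.852 := by
      rw [intervalIntegral.integral_mul_const, hI2]
    linarith
  have hI3 : ∫ s in (0:ℝ)..γ, g' s * Fsi s ≤ 0 := by
    have hm : ∫ s in (0:ℝ)..γ, g' s * Fsi s ≤ ∫ s in (0:ℝ)..γ, (0:ℝ) := by
      apply intervalIntegral.integral_mono_on hγ.le hg'Fint
        (by apply Continuous.intervalIntegrable; fun_prop)
      intro s hs
      exact mul_nonpos_of_nonpos_of_nonneg (hdec s hs) (Fsi_bounds hs.1).1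
    simpa using hm
  have hFγ := Fsi_bounds hγ.le
  have hgγ : 0 < g γ := hpos γ ⟨hγ.le, le_refl γ⟩
  have hg0 : 0 < g 0 := hpos 0 ⟨le_refl 0, hγ.le⟩
  rw [hEq, hFg, hFsi0, abs_le]
  constructor
  · have : 0 ≤ g γ * Fsi γ := mul_nonneg hgγ.le hFγ.1
    nlinarith
  · have h5 : g γ * Fsi γ ≤ g γ * 1.852 := mul_le_mul_of_nonneg_left hFγ.2 hgγ.le
    nlinarith
end
end
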